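/- arXiv:2210.04807 — 5 statements merged into one kernel-verified Lean document; each statement's English description precedes it below -/
import Mathlib

section
/- Fix δ ∈ (0,1) and λ₀ > 0, and fix C ∈ ℝ^{ℓ×d} such that ‖C X_iᵀ‖ = 1 and |X_i Cᵀ C X_jᵀ| ≤ 2 for all i, j ∈ [n]. Let B(0) ∈ ℝ^{m×ℓ} have i.i.d. N(0,1) entries, and assume λ_min(H(B(0))) ≥ λ₀/2. There exists an absolute constant c > 0 such that, with probability at least 1 − δ over B(0), the following holds with R := c·δ·λ₀/n²: for every matrix B ∈ ℝ^{m×ℓ} satisfying ‖B_r C − B_r(0) C‖ ≤ R for all r ∈ [m], one has ‖H(B) − H(B(0))‖ ≤ λ₀/4 and λ_min(H(B)) ≥ λ₀/4. -/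
open MeasureTheory ProbabilityTheory Real
open scoped NNReal

noncomputable section

/-- Real-valued indicator of a proposition. -/
def ind (P : Prop) : ℝ := @ite _ P (Classical.dec P) 1 0

/-- Dot product of two real vectors. -/
def dot {p : ℕ} (x y : Fin p → ℝ) : ℝ := ∑ i, x i * y i

/-- Matrix-vector product. -/
def mvec {a b : ℕ} (M : Fin a → Fin b → ℝ) (x : Fin b → ℝ) : Fin a → ℝ := fun i => dot (M i) x

/-- Vector-matrix product. -/
def vmul {a b : ℕ} (x : Fin a → ℝ) (M : Fin a → Fin b → ℝ) : Fin b → ℝ :=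
  fun j => ∑ i, x i * M i j

/-- Euclidean norm of a real vector. -/
def eunorm {p : ℕ} (x : Fin p → ℝ) : ℝ := Real.sqrt (∑ i, x i ^ 2)

/-- ℓ²→ℓ² operator (spectral) norm of a matrix. -/
def specNorm {a b : ℕ} (M : Fin a → Fin b → ℝ) : ℝ :=
  sSup {c : ℝ | ∃ x : Fin b → ℝ, ∑ j, x j ^ 2 ≤ 1 ∧ c = eunorm (mvec M x)}

/-- Smallest eigenvalue of a (symmetric) matrix, as the infimum of the quadratic form
over the unit sphere. -/
def lamMin {n : ℕ} (M : Fin n → Fin n → ℝ) : ℝ :=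
  sInf {c : ℝ | ∃ x : Fin n → ℝ, ∑ i, x i ^ 2 = 1 ∧ c = dot x (mvec M x)}

/-- Standard Gaussian measure on ℝ^b. -/
def stdGaussian (b : ℕ) : Measure (Fin b → ℝ) := Measure.pi fun _ => gaussianReal 0 1

/-- Measure on a×b real matrices with i.i.d. centered Gaussian entries of variance `v`. -/
def gaussMatrix (a b : ℕ) (v : ℝ≥0) : Measure (Fin a → Fin b → ℝ) :=
  Measure.pi fun _ => Measure.pi fun _ => gaussianReal 0 v

/-- Uniform measure on {-1, 1} ⊆ ℝ. -/
def signMeasure : Measure ℝ :=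
  (PMF.uniformOfFinset ({-1, 1} : Finset ℝ) ⟨-1, by simp⟩).toMeasure

instance : IsProbabilityMeasure signMeasure := by
  unfold signMeasure; infer_instance

/-- Uniform measure on {-1,1}^m. -/
def signVec (m : ℕ) : Measure (Fin m → ℝ) := Measure.pi fun _ => signMeasure

instance (b : ℕ) : IsProbabilityMeasure (stdGaussian b) := by
  unfold _root_.stdGaussian; infer_instance

instance (a b : ℕ) (v : ℝ≥0) : IsProbabilityMeasure (gaussMatrix a b v) := by
  unfold gaussMatrix; infer_instance

instance (m : ℕ) : IsProbabilityMeasure (signVec m) := by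
  unfold signVec; infer_instance

/-- Output of the plain two-layer ReLU network. -/
def netPlain {n d m : ℕ} (X : Fin n → Fin d → ℝ) (v : Fin m → ℝ)
    (W : Fin m → Fin d → ℝ) (i : Fin n) : ℝ :=
  (Real.sqrt m)⁻¹ * ∑ r, v r * max 0 (dot (W r) (X i))

/-- Gradient of Φ(W) = ½‖y-u‖² w.r.t. the r-th row of W (plain network). -/
def gradPlain {n d m : ℕ} (X : Fin n → Fin d → ℝ) (v : Fin m → ℝ) (y : Fin n → ℝ)
    (W : Fin m → Fin d → ℝ) (r : Fin m) : Fin d → ℝ :=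
  fun q => -(Real.sqrt m)⁻¹ *
    ∑ j, (y j - netPlain X v W j) * v r * ind (0 ≤ dot (W r) (X j)) * X j q

/-- NTK matrix of the plain network. -/
def HinfPlain {n d : ℕ} (X : Fin n → Fin d → ℝ) (i j : Fin n) : ℝ :=
  ∫ w, dot (X i) (X j) * ind (0 ≤ dot w (X i)) * ind (0 ≤ dot w (X j)) ∂ stdGaussian d

/-- `X_i Cᵀ C X_jᵀ`. -/
def dotC {n d ℓ : ℕ} (X : Fin n → Fin d → ℝ) (C : Fin ℓ → Fin d → ℝ) (i j : Fin n) : ℝ :=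
  dot (mvec C (X i)) (mvec C (X j))

/-- Output of the input-dimension-reduced two-layer ReLU network. -/
def netFac {n d ℓ m : ℕ} (X : Fin n → Fin d → ℝ) (C : Fin ℓ → Fin d → ℝ)
    (v : Fin m → ℝ) (B : Fin m → Fin ℓ → ℝ) (i : Fin n) : ℝ :=
  (Real.sqrt m)⁻¹ * ∑ r, v r * max 0 (dot (B r) (mvec C (X i)))

/-- Gradient of Φ(B) = ½‖y-u‖² w.r.t. the r-th row of B (input-dimension-reduced network). -/
def gradFac {n d ℓ m : ℕ} (X : Fin n → Fin d → ℝ) (C : Fin ℓ → Fin d → ℝ)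
    (v : Fin m → ℝ) (y : Fin n → ℝ) (B : Fin m → Fin ℓ → ℝ) (r : Fin m) : Fin ℓ → ℝ :=
  fun q => -(Real.sqrt m)⁻¹ *
    ∑ j, (y j - netFac X C v B j) * v r * ind (0 ≤ dot (B r) (mvec C (X j))) * mvec C (X j) q

/-- NTK matrix of the input-dimension-reduced network. -/
def HinfFac {n d ℓ : ℕ} (X : Fin n → Fin d → ℝ) (C : Fin ℓ → Fin d → ℝ) (i j : Fin n) : ℝ :=
  ∫ b, dotC X C i j * ind (0 ≤ dot b (mvec C (X i))) * ind (0 ≤ dot b (mvec C (X j)))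
    ∂ stdGaussian ℓ

/-- Empirical NTK matrix of the input-dimension-reduced network at weights B. -/
def HFac {n d ℓ m : ℕ} (X : Fin n → Fin d → ℝ) (C : Fin ℓ → Fin d → ℝ)
    (B : Fin m → Fin ℓ → ℝ) (i j : Fin n) : ℝ :=
  (m : ℝ)⁻¹ * ∑ r, dotC X C i j * ind (0 ≤ dot (B r) (mvec C (X i))) *
    ind (0 ≤ dot (B r) (mvec C (X j)))

/-- Output of the width-reduced two-layer ReLU network (W = A·B·C). -/
def netWidth {n d ℓ k m : ℕ} (X : Fin n → Fin d → ℝ) (C : Fin ℓ → Fin d → ℝ)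
    (A : Fin m → Fin k → ℝ) (v : Fin m → ℝ) (B : Fin k → Fin ℓ → ℝ) (i : Fin n) : ℝ :=
  (Real.sqrt m)⁻¹ * ∑ r, v r * max 0 (dot (A r) (mvec B (mvec C (X i))))

/-- The sign-indicator vector Z_i(B) of the width-reduced network. -/
def Zvec {n d ℓ k m : ℕ} (X : Fin n → Fin d → ℝ) (C : Fin ℓ → Fin d → ℝ)
    (A : Fin m → Fin k → ℝ) (v : Fin m → ℝ) (B : Fin k → Fin ℓ → ℝ) (i : Fin n) :
    Fin m → ℝ :=
  fun r => v r * ind (0 ≤ dot (A r) (mvec B (mvec C (X i))))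

/-- Gradient of Φ(B) = ½‖y-u‖² w.r.t. B (width-reduced network). -/
def gradWidth {n d ℓ k m : ℕ} (X : Fin n → Fin d → ℝ) (C : Fin ℓ → Fin d → ℝ)
    (A : Fin m → Fin k → ℝ) (v : Fin m → ℝ) (y : Fin n → ℝ)
    (B : Fin k → Fin ℓ → ℝ) : Fin k → Fin ℓ → ℝ :=
  fun a b => -(Real.sqrt m)⁻¹ *
    ∑ j, (y j - netWidth X C A v B j) * vmul (Zvec X C A v B j) A a * mvec C (X j) b

/-- Empirical NTK matrix of the width-reduced network at weights B. -/
def HWidth {n d ℓ k m : ℕ} (X : Fin n → Fin d → ℝ) (C : Fin ℓ → Fin d → ℝ)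
    (A : Fin m → Fin k → ℝ) (v : Fin m → ℝ) (B : Fin k → Fin ℓ → ℝ) (i j : Fin n) : ℝ :=
  (m : ℝ)⁻¹ * dotC X C i j * dot (vmul (Zvec X C A v B i) A) (vmul (Zvec X C A v B j) A)

/-- NTK matrix of the width-reduced network. -/
def HinfWidth {n d ℓ k m : ℕ} (X : Fin n → Fin d → ℝ) (C : Fin ℓ → Fin d → ℝ)
    (A : Fin m → Fin k → ℝ) (v : Fin m → ℝ) (i j : Fin n) : ℝ :=
  ∫ B, HWidth X C A v B i j ∂ gaussMatrix k ℓ 1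


open scoped ENNReal

namespace Stmt3Aux

/-! ### Elementary dot-product lemmas -/

lemma dot_comm {p : ℕ} (x y : Fin p → ℝ) : dot x y = dot y x :=
  Finset.sum_congr rfl fun i _ => mul_comm _ _

lemma measurable_dot_left {p : ℕ} (a : Fin p → ℝ) : Measurable (fun b => dot a b) := by
  unfold dot
  exact Finset.measurable_sum _ fun i _ => by fun_prop

lemma dot_mvec_vmul {d ℓ : ℕ} (C : Fin ℓ → Fin d → ℝ) (w : Fin ℓ → ℝ) (x : Fin d → ℝ) :
    dot w (mvec C x) = dot (vmul w C) x := by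
  unfold dot mvec vmul dot
  simp_rw [Finset.mul_sum, Finset.sum_mul]
  rw [Finset.sum_comm]
  exact Finset.sum_congr rfl fun j _ => Finset.sum_congr rfl fun q _ => (mul_assoc _ _ _).symm

lemma abs_dot_le {p : ℕ} (w x : Fin p → ℝ) (hx : ∑ i, x i ^ 2 = 1) : |dot w x| ≤ eunorm w := by
  have hcs := Finset.sum_mul_sq_le_sq_mul_sq Finset.univ w x
  rw [hx, mul_one] at hcs
  have h1 : |dot w x| = Real.sqrt ((∑ i, w i * x i) ^ 2) := by
    rw [Real.sqrt_sq_eq_abs]; rfl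
  rw [h1, eunorm]
  exact Real.sqrt_le_sqrt hcs

/-! ### Indicator lemmas -/

lemma ind_abs_le_one (P : Prop) : |ind P| ≤ 1 := by
  unfold ind; split_ifs <;> norm_num

lemma ind_abs_sub_le_one (P Q : Prop) : |ind P - ind Q| ≤ 1 := by
  unfold ind; split_ifs <;> norm_num

lemma ind_flip {R b b0 : ℝ} (hd : |b - b0| ≤ R) (hfar : R < |b0|) :
    ind (0 ≤ b) = ind (0 ≤ b0) := by
  have hR0 : (0:ℝ) ≤ R := le_trans (abs_nonneg _) hd
  have hd' := abs_le.mp hd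
  rcases lt_abs.mp hfar with h | h
  · have hb : 0 ≤ b := by linarith [hd'.2]
    have hb0 : 0 ≤ b0 := by linarith
    simp [ind, hb, hb0]
  · have hb : ¬ (0 ≤ b) := by push_neg; linarith [hd'.1]
    have hb0 : ¬ (0 ≤ b0) := by push_neg; linarith
    simp [ind, hb, hb0]

lemma abs_mul_sub_mul {a b a' b' : ℝ} (ha : |a| ≤ 1) (hb' : |b'| ≤ 1) :
    |a * b - a' * b'| ≤ |a - a'| + |b - b'| := by
  have h0 : a * b - a' * b' = a * (b - b') + (a - a') * b' := by ring
  rw [h0]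
  calc |a * (b - b') + (a - a') * b'| ≤ |a * (b - b')| + |(a - a') * b'| := abs_add_le _ _
    _ = |a| * |b - b'| + |a - a'| * |b'| := by rw [abs_mul, abs_mul]
    _ ≤ 1 * |b - b'| + |a - a'| * 1 :=
        add_le_add (mul_le_mul_of_nonneg_right ha (abs_nonneg _))
          (mul_le_mul_of_nonneg_left hb' (abs_nonneg _))
    _ = |a - a'| + |b - b'| := by ring

/-! ### Quadratic form / norm lemmas -/

lemma abs_le_one_of_sq {x : ℝ} (h : x ^ 2 ≤ 1) : |x| ≤ 1 := by
  nlinarith [abs_nonneg x, sq_abs x]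

lemma coord_abs_le_one {n : ℕ} {x : Fin n → ℝ} (hx : ∑ i, x i ^ 2 ≤ 1) (i : Fin n) :
    |x i| ≤ 1 :=
  abs_le_one_of_sq (le_trans (Finset.single_le_sum (fun i _ => sq_nonneg (x i))
    (Finset.mem_univ i)) hx)

lemma abs_dot_row_le {n : ℕ} (Mi : Fin n → ℝ) {x : Fin n → ℝ} (hx : ∑ i, x i ^ 2 ≤ 1) :
    |dot Mi x| ≤ ∑ j, |Mi j| := by
  unfold dot
  calc |∑ j, Mi j * x j| ≤ ∑ j, |Mi j * x j| := Finset.abs_sum_le_sum_abs _ _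
    _ ≤ ∑ j, |Mi j| := Finset.sum_le_sum fun j _ => by
        rw [abs_mul]
        calc |Mi j| * |x j| ≤ |Mi j| * 1 :=
              mul_le_mul_of_nonneg_left (coord_abs_le_one hx j) (abs_nonneg _)
          _ = |Mi j| := mul_one _

lemma abs_quadform_le {n : ℕ} (M : Fin n → Fin n → ℝ) (x : Fin n → ℝ)
    (hx : ∑ i, x i ^ 2 ≤ 1) :
    |dot x (mvec M x)| ≤ ∑ i, ∑ j, |M i j| := by
  unfold dot mvec
  calc |∑ i, x i * dot (M i) x| ≤ ∑ i, |x i * dot (M i) x| := Finset.abs_sum_le_sum_abs _ _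
    _ ≤ ∑ i, ∑ j, |M i j| := Finset.sum_le_sum fun i _ => by
        rw [abs_mul]
        calc |x i| * |dot (M i) x| ≤ 1 * |dot (M i) x| :=
              mul_le_mul_of_nonneg_right (coord_abs_le_one hx i) (abs_nonneg _)
          _ = |dot (M i) x| := one_mul _
          _ ≤ ∑ j, |M i j| := abs_dot_row_le (M i) hx

lemma eunorm_mvec_le {n n' : ℕ} (M : Fin n → Fin n' → ℝ) (x : Fin n' → ℝ)
    (hx : ∑ i, x i ^ 2 ≤ 1) :
    eunorm (mvec M x) ≤ ∑ i, ∑ j, |M i j| := by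
  unfold eunorm mvec
  have hρnn : (0:ℝ) ≤ ∑ i, ∑ j, |M i j| :=
    Finset.sum_nonneg fun i _ => Finset.sum_nonneg fun j _ => abs_nonneg _
  have h1 : ∑ i, (dot (M i) x) ^ 2 ≤ ∑ i, (∑ j, |M i j|) ^ 2 := by
    refine Finset.sum_le_sum fun i _ => ?_
    rw [← sq_abs]
    exact pow_le_pow_left₀ (abs_nonneg _) (abs_dot_row_le (M i) hx) 2
  have h2 : ∑ i, (∑ j, |M i j|) ^ 2 ≤ (∑ i, ∑ j, |M i j|) ^ 2 :=
    Finset.sum_sq_le_sq_sum_of_nonneg fun i _ => Finset.sum_nonneg fun j _ => abs_nonneg _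
  calc Real.sqrt (∑ i, (dot (M i) x) ^ 2) ≤ Real.sqrt ((∑ i, ∑ j, |M i j|) ^ 2) :=
        Real.sqrt_le_sqrt (h1.trans h2)
    _ = ∑ i, ∑ j, |M i j| := by rw [Real.sqrt_sq_eq_abs]; exact abs_of_nonneg hρnn

lemma quad_sub {n : ℕ} (M N : Fin n → Fin n → ℝ) (x : Fin n → ℝ) :
    dot x (mvec (fun i j => M i j - N i j) x) = dot x (mvec M x) - dot x (mvec N x) := by
  unfold dot mvec dot
  rw [← Finset.sum_sub_distrib]
  refine Finset.sum_congr rfl fun i _ => ?_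
  rw [← mul_sub, ← Finset.sum_sub_distrib]
  congr 1
  exact Finset.sum_congr rfl fun j _ => by ring

lemma bddBelow_quadset {n : ℕ} (M : Fin n → Fin n → ℝ) :
    BddBelow {c : ℝ | ∃ x : Fin n → ℝ, ∑ i, x i ^ 2 = 1 ∧ c = dot x (mvec M x)} := by
  refine ⟨-(∑ i, ∑ j, |M i j|), fun c hc => ?_⟩
  obtain ⟨x, hx, rfl⟩ := hc
  have := abs_quadform_le M x hx.le
  linarith [neg_abs_le (dot x (mvec M x))]

lemma lamMin_le_quad {n : ℕ} (M : Fin n → Fin n → ℝ) (x : Fin n → ℝ)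
    (hx : ∑ i, x i ^ 2 = 1) : lamMin M ≤ dot x (mvec M x) :=
  csInf_le (bddBelow_quadset M) ⟨x, hx, rfl⟩

lemma le_lamMin {n : ℕ} (hn : 0 < n) (M : Fin n → Fin n → ℝ) (b : ℝ)
    (h : ∀ x : Fin n → ℝ, ∑ i, x i ^ 2 = 1 → b ≤ dot x (mvec M x)) : b ≤ lamMin M := by
  refine le_csInf ?_ fun c hc => ?_
  · set x0 : Fin n → ℝ := Pi.single (⟨0, hn⟩ : Fin n) (1:ℝ) with hx0
    refine ⟨dot x0 (mvec M x0), ⟨x0, ?_, rfl⟩⟩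
    have : ∀ i : Fin n, (x0 i) ^ 2
        = if i = ⟨0, hn⟩ then 1 else 0 := by
      intro i
      rcases eq_or_ne i ⟨0, hn⟩ with h | h <;> simp [hx0, Pi.single_apply, h]
    simp [this]
  · obtain ⟨x, hx, rfl⟩ := hc
    exact h x hx

lemma specNorm_le {a b : ℕ} (M : Fin a → Fin b → ℝ) (K : ℝ)
    (h : ∀ x : Fin b → ℝ, ∑ j, x j ^ 2 ≤ 1 → eunorm (mvec M x) ≤ K) : specNorm M ≤ K := by
  refine csSup_le ⟨eunorm (mvec M 0), ⟨0, by simp, rfl⟩⟩ fun c hc => ?_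
  obtain ⟨x, hx, rfl⟩ := hc
  exact h x hx

/-! ### Deterministic main lemma -/

lemma det_main {n d ℓ m : ℕ} (hn : 0 < n) (hm : 0 < m)
    (X : Fin n → Fin d → ℝ) (hX : ∀ i, ∑ j, X i j ^ 2 = 1)
    (C : Fin ℓ → Fin d → ℝ) (hC2 : ∀ i j, |dotC X C i j| ≤ 2)
    (lam0 R : ℝ) (hl : 0 < lam0) (hR : 0 ≤ R)
    (B0 B : Fin m → Fin ℓ → ℝ)
    (hrow : ∀ r, eunorm (fun q => vmul (B r) C q - vmul (B0 r) C q) ≤ R)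
    (hcount : (∑ r : Fin m, ∑ i : Fin n,
        if |dot (B0 r) (mvec C (X i))| ≤ R then (1:ℝ) else 0)
        ≤ (m:ℝ) * lam0 / (16 * (n:ℝ)))
    (hmin : lam0 / 2 ≤ lamMin (HFac X C B0)) :
    specNorm (fun i j => HFac X C B i j - HFac X C B0 i j) ≤ lam0 / 4 ∧
      lam0 / 4 ≤ lamMin (HFac X C B) := by
  have hnR : (0:ℝ) < n := by exact_mod_cast hn
  have hmR : (0:ℝ) < m := by exact_mod_cast hm
  set f : Fin m → Fin n → ℝ :=
    fun r i => if |dot (B0 r) (mvec C (X i))| ≤ R then 1 else 0 with hf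
  have hf0 : ∀ r i, 0 ≤ f r i := fun r i => by rw [hf]; positivity
  set Δ : Fin n → Fin n → ℝ := fun i j => HFac X C B i j - HFac X C B0 i j with hΔ
  have hinddiff : ∀ r i, |ind (0 ≤ dot (B r) (mvec C (X i)))
      - ind (0 ≤ dot (B0 r) (mvec C (X i)))| ≤ f r i := by
    intro r i
    by_cases hc : |dot (B0 r) (mvec C (X i))| ≤ R
    · rw [hf]; simp only [if_pos hc]; exact ind_abs_sub_le_one _ _
    · rw [hf]; simp only [if_neg hc]
      have hdiff : |dot (B r) (mvec C (X i)) - dot (B0 r) (mvec C (X i))| ≤ R := by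
        rw [dot_mvec_vmul, dot_mvec_vmul]
        have h3 : dot (vmul (B r) C) (X i) - dot (vmul (B0 r) C) (X i)
            = dot (fun q => vmul (B r) C q - vmul (B0 r) C q) (X i) := by
          unfold dot
          rw [← Finset.sum_sub_distrib]
          exact Finset.sum_congr rfl fun j _ => by ring
        rw [h3]
        exact (abs_dot_le _ _ (hX i)).trans (hrow r)
      rw [ind_flip hdiff (not_le.mp hc)]
      simp
  have hentry : ∀ i j, |Δ i j| ≤ (m:ℝ)⁻¹ * ∑ r, 2 * (f r i + f r j) := by
    intro i j
    have hΔeq : Δ i j = (m:ℝ)⁻¹ * ∑ r,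
        (dotC X C i j * ind (0 ≤ dot (B r) (mvec C (X i))) * ind (0 ≤ dot (B r) (mvec C (X j)))
        - dotC X C i j * ind (0 ≤ dot (B0 r) (mvec C (X i)))
          * ind (0 ≤ dot (B0 r) (mvec C (X j)))) := by
      rw [hΔ]
      show HFac X C B i j - HFac X C B0 i j = _
      unfold HFac
      rw [← mul_sub, ← Finset.sum_sub_distrib]
    rw [hΔeq, abs_mul, abs_inv, Nat.abs_cast]
    refine mul_le_mul_of_nonneg_left ?_ (by positivity)
    calc |∑ r, (dotC X C i j * ind (0 ≤ dot (B r) (mvec C (X i)))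
            * ind (0 ≤ dot (B r) (mvec C (X j)))
          - dotC X C i j * ind (0 ≤ dot (B0 r) (mvec C (X i)))
            * ind (0 ≤ dot (B0 r) (mvec C (X j))))|
        ≤ ∑ r, |dotC X C i j * ind (0 ≤ dot (B r) (mvec C (X i)))
            * ind (0 ≤ dot (B r) (mvec C (X j)))
          - dotC X C i j * ind (0 ≤ dot (B0 r) (mvec C (X i)))
            * ind (0 ≤ dot (B0 r) (mvec C (X j)))| := Finset.abs_sum_le_sum_abs _ _
      _ ≤ ∑ r, 2 * (f r i + f r j) := by
        refine Finset.sum_le_sum fun r _ => ?_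
        have hfact : dotC X C i j * ind (0 ≤ dot (B r) (mvec C (X i)))
              * ind (0 ≤ dot (B r) (mvec C (X j)))
            - dotC X C i j * ind (0 ≤ dot (B0 r) (mvec C (X i)))
              * ind (0 ≤ dot (B0 r) (mvec C (X j)))
            = dotC X C i j * (ind (0 ≤ dot (B r) (mvec C (X i)))
              * ind (0 ≤ dot (B r) (mvec C (X j)))
            - ind (0 ≤ dot (B0 r) (mvec C (X i)))
              * ind (0 ≤ dot (B0 r) (mvec C (X j)))) := by ring
        rw [hfact, abs_mul]
        have hb : |ind (0 ≤ dot (B r) (mvec C (X i))) * ind (0 ≤ dot (B r) (mvec C (X j)))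
            - ind (0 ≤ dot (B0 r) (mvec C (X i))) * ind (0 ≤ dot (B0 r) (mvec C (X j)))|
            ≤ f r i + f r j :=
          le_trans (abs_mul_sub_mul (ind_abs_le_one _) (ind_abs_le_one _))
            (add_le_add (hinddiff r i) (hinddiff r j))
        exact mul_le_mul (hC2 i j) hb (abs_nonneg _) (by norm_num)
  set S : ℝ := ∑ r, ∑ i, f r i with hS
  have hE : (∑ i, ∑ j, |Δ i j|) ≤ lam0 / 4 := by
    have hsum : (∑ i : Fin n, ∑ j : Fin n, ((m:ℝ)⁻¹ * ∑ r, 2 * (f r i + f r j)))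
        = (m:ℝ)⁻¹ * (4 * n * S) := by
      have expand : ∀ i j : Fin n, ((m:ℝ)⁻¹ * ∑ r, 2 * (f r i + f r j))
          = (m:ℝ)⁻¹ * 2 * ((∑ r, f r i) + ∑ r, f r j) := by
        intro i j
        rw [show (∑ r, 2 * (f r i + f r j)) = 2 * ∑ r, (f r i + f r j) from
          (Finset.mul_sum _ _ _).symm, Finset.sum_add_distrib]
        ring
      simp_rw [expand]
      have h1 : ∑ i : Fin n, ∑ j : Fin n, ((m:ℝ)⁻¹ * 2 * ((∑ r, f r i) + ∑ r, f r j))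
          = ∑ i : Fin n, ((m:ℝ)⁻¹ * 2 * ((n:ℝ) * (∑ r, f r i) + ∑ j : Fin n, ∑ r, f r j)) := by
        refine Finset.sum_congr rfl fun i _ => ?_
        rw [← Finset.mul_sum, Finset.sum_add_distrib, Finset.sum_const, Finset.card_univ,
          Fintype.card_fin, nsmul_eq_mul]
      rw [h1]
      have h2 : ∑ j : Fin n, ∑ r, f r j = S := by
        rw [hS]; exact Finset.sum_comm
      simp_rw [h2]
      rw [← Finset.mul_sum, Finset.sum_add_distrib, ← Finset.mul_sum, Finset.sum_const,
        Finset.card_univ, Fintype.card_fin, nsmul_eq_mul]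
      have h3 : ∑ i : Fin n, ∑ r, f r i = S := by rw [hS]; exact Finset.sum_comm
      rw [h3]
      ring
    have hstep : (∑ i, ∑ j, |Δ i j|) ≤ (m:ℝ)⁻¹ * (4 * n * S) := by
      rw [← hsum]
      exact Finset.sum_le_sum fun i _ => Finset.sum_le_sum fun j _ => hentry i j
    refine hstep.trans ?_
    have hSle : S ≤ (m:ℝ) * lam0 / (16 * (n:ℝ)) := hcount
    have : (m:ℝ)⁻¹ * (4 * n * S) ≤ (m:ℝ)⁻¹ * (4 * n * ((m:ℝ) * lam0 / (16 * (n:ℝ)))) := by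
      have h4 : (0:ℝ) ≤ (m:ℝ)⁻¹ := by positivity
      have h5 : 4 * (n:ℝ) * S ≤ 4 * n * ((m:ℝ) * lam0 / (16 * (n:ℝ))) := by
        refine mul_le_mul_of_nonneg_left hSle (by positivity)
      exact mul_le_mul_of_nonneg_left h5 h4
    refine this.trans ?_
    rw [show (m:ℝ)⁻¹ * (4 * n * ((m:ℝ) * lam0 / (16 * (n:ℝ)))) = lam0 / 4 by
      field_simp
      ring]
  constructor
  · refine specNorm_le _ _ fun x hx => ?_
    exact (eunorm_mvec_le Δ x hx).trans hE
  · refine le_lamMin hn _ _ fun x hx => ?_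
    have h1 : lam0 / 2 ≤ dot x (mvec (HFac X C B0) x) :=
      le_trans hmin (lamMin_le_quad _ x hx)
    have h2 : |dot x (mvec Δ x)| ≤ lam0 / 4 :=
      (abs_quadform_le Δ x hx.le).trans hE
    have h3 : dot x (mvec Δ x) = dot x (mvec (HFac X C B) x)
        - dot x (mvec (HFac X C B0) x) := quad_sub _ _ x
    have h4 := (abs_le.mp h2).1
    linarith


lemma gpdf_swap {s t : ℝ} (h : s^2 + t^2 = 1) (ht : t ≠ 0) (u x : ℝ) :
    gaussianPDFReal (s*x) (⟨t^2, sq_nonneg t⟩ * 1) u * gaussianPDFReal 0 1 x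
      = gaussianPDFReal 0 1 u * gaussianPDFReal (s*u) (⟨t^2, sq_nonneg t⟩ * 1) x := by
  have ht2 : t^2 ≠ 0 := pow_ne_zero 2 ht
  set v : ℝ≥0 := ⟨t^2, sq_nonneg t⟩ * 1 with hv
  have hvr : (v : ℝ) = t^2 := by rw [hv]; exact mul_one (t^2)
  simp only [gaussianPDFReal, hvr, NNReal.coe_mul, NNReal.coe_mk, NNReal.coe_one, mul_one]
  rw [mul_mul_mul_comm, mul_mul_mul_comm ((√(2*π))⁻¹)]
  rw [mul_comm ((√(2*π*(t^2)))⁻¹) ((√(2*π))⁻¹)]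
  congr 1
  rw [← Real.exp_add, ← Real.exp_add]
  congr 1
  field_simp
  ring_nf
  linear_combination (u^2 - x^2) * h

lemma map_lin_prod_gaussian {s t : ℝ} (h : s^2 + t^2 = 1) (ht : t ≠ 0) :
    ((gaussianReal 0 1).prod (gaussianReal 0 1)).map (fun p : ℝ × ℝ => s * p.1 + t * p.2)
      = gaussianReal 0 1 := by
  set vt : ℝ≥0 := ⟨t^2, sq_nonneg t⟩ * 1 with hvt_def
  have hvt : vt ≠ 0 := by
    simp only [hvt_def, mul_one, ne_eq, ← NNReal.coe_eq_zero]
    exact (show ((⟨t^2, sq_nonneg t⟩ : ℝ≥0) : ℝ) * 1 ≠ 0 by simpa using pow_ne_zero 2 ht)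
  have hmf : Measurable (fun p : ℝ × ℝ => s * p.1 + t * p.2) := by fun_prop
  have hjoint : Measurable (fun q : ℝ × ℝ => gaussianPDF (s * q.1) vt q.2) := by
    unfold gaussianPDF gaussianPDFReal
    refine Measurable.ennreal_ofReal ?_
    fun_prop
  ext A hA
  have hF : Measurable (fun q : ℝ × ℝ => Set.indicator (Prod.snd ⁻¹' A)
      (fun q : ℝ × ℝ => gaussianPDF (s * q.1) vt q.2) q) :=
    hjoint.indicator (measurable_snd hA)
  have key : ∀ x : ℝ, (gaussianReal 0 1) ((fun y => s * x + t * y) ⁻¹' A)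
      = ∫⁻ u, Set.indicator (Prod.snd ⁻¹' A)
          (fun q : ℝ × ℝ => gaussianPDF (s * q.1) vt q.2) (x, u) := by
    intro x
    have h1 : (gaussianReal 0 1).map (fun y : ℝ => s * x + t * y) = gaussianReal (s*x) vt := by
      have hco : (fun y : ℝ => s * x + t * y) = (fun z : ℝ => s*x + z) ∘ (fun y : ℝ => t * y) := rfl
      rw [hco, ← Measure.map_map (by fun_prop) (by fun_prop),
        gaussianReal_map_const_mul t, gaussianReal_map_const_add]
      simp [hvt_def]
      exact congrArg _ (NNReal.eq (mul_one (t^2)).symm)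
    rw [← Measure.map_apply (by fun_prop) hA, h1, gaussianReal_apply _ hvt A,
      ← lintegral_indicator hA]
    congr 1
  rw [Measure.map_apply hmf hA, Measure.prod_apply (hmf hA)]
  have hpre : ∀ x : ℝ, (Prod.mk x ⁻¹' ((fun p : ℝ×ℝ => s*p.1+t*p.2) ⁻¹' A))
      = (fun y => s*x+t*y) ⁻¹' A := fun x => rfl
  simp_rw [hpre, key]
  rw [gaussianReal_of_var_ne_zero 0 one_ne_zero,
    lintegral_withDensity_eq_lintegral_mul _ (measurable_gaussianPDF 0 1)
      (hF.lintegral_prod_right')]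
  have hmul : ∀ x : ℝ, (gaussianPDF 0 1 * fun x => ∫⁻ u, Set.indicator (Prod.snd ⁻¹' A)
        (fun q : ℝ × ℝ => gaussianPDF (s * q.1) vt q.2) (x, u)) x
      = ∫⁻ u, gaussianPDF 0 1 x * Set.indicator (Prod.snd ⁻¹' A)
        (fun q : ℝ × ℝ => gaussianPDF (s * q.1) vt q.2) (x, u) := by
    intro x
    simp only [Pi.mul_apply]
    exact (lintegral_const_mul (gaussianPDF 0 1 x) (f := fun u => Set.indicator (Prod.snd ⁻¹' A) (fun q : ℝ × ℝ => gaussianPDF (s * q.1) vt q.2) (x, u)) (hF.comp measurable_prodMk_left)).symm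
  simp_rw [hmul]
  rw [lintegral_lintegral_swap (((measurable_gaussianPDF 0 1).comp measurable_fst).mul hF).aemeasurable]
  have hinner : ∀ u : ℝ, (∫⁻ x, gaussianPDF 0 1 x * Set.indicator (Prod.snd ⁻¹' A)
        (fun q : ℝ × ℝ => gaussianPDF (s * q.1) vt q.2) (x, u))
      = Set.indicator A (gaussianPDF 0 1) u := by
    intro u
    by_cases hu : u ∈ A
    · have hind : ∀ x : ℝ, Set.indicator (Prod.snd ⁻¹' A)
          (fun q : ℝ × ℝ => gaussianPDF (s * q.1) vt q.2) (x, u) = gaussianPDF (s*x) vt u := by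
        intro x; rw [Set.indicator_of_mem (by exact hu)]
      simp_rw [hind]
      have hswap : ∀ x : ℝ, gaussianPDF 0 1 x * gaussianPDF (s*x) vt u
          = gaussianPDF 0 1 u * gaussianPDF (s*u) vt x := by
        intro x
        unfold gaussianPDF
        rw [← ENNReal.ofReal_mul (gaussianPDFReal_nonneg _ _ _),
          ← ENNReal.ofReal_mul (gaussianPDFReal_nonneg _ _ _)]
        rw [mul_comm (gaussianPDFReal 0 1 x)]
        exact congrArg ENNReal.ofReal (gpdf_swap h ht u x)
      simp_rw [hswap]
      rw [lintegral_const_mul _ (by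
        unfold gaussianPDF gaussianPDFReal
        exact Measurable.ennreal_ofReal (by fun_prop)), lintegral_gaussianPDF_eq_one _ hvt,
        mul_one, Set.indicator_of_mem hu]
    · have hind : ∀ x : ℝ, Set.indicator (Prod.snd ⁻¹' A)
          (fun q : ℝ × ℝ => gaussianPDF (s * q.1) vt q.2) (x, u) = 0 := by
        intro x; rw [Set.indicator_of_notMem (by exact hu)]
      simp_rw [hind, mul_zero, lintegral_zero, Set.indicator_of_notMem hu]
  simp_rw [hinner]
  rw [lintegral_indicator hA, ← gaussianReal_apply _ one_ne_zero,
    gaussianReal_of_var_ne_zero 0 one_ne_zero]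

def dotL {p : ℕ} (a : Fin p → ℝ) : (Fin p → ℝ) → ℝ := fun b => ∑ i, a i * b i

lemma measurable_dotL {p : ℕ} (a : Fin p → ℝ) : Measurable (dotL a) := by
  unfold dotL
  exact Finset.measurable_sum _ fun i _ => by fun_prop

def stdG (b : ℕ) : Measure (Fin b → ℝ) := Measure.pi fun _ => gaussianReal 0 1

instance (b : ℕ) : IsProbabilityMeasure (stdG b) := by unfold stdG; infer_instance

lemma map_dotL_stdG : ∀ (p : ℕ) (a : Fin p → ℝ), (∑ j, a j ^ 2) = 1 →
    (stdG p).map (dotL a) = gaussianReal 0 1 := by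
  intro p
  induction p with
  | zero => intro a ha; simp at ha
  | succ p IH =>
    intro a ha
    set e := MeasurableEquiv.piFinSuccAbove (fun _ : Fin (p+1) => ℝ) 0 with he
    have mp := measurePreserving_piFinSuccAbove (fun _ : Fin (p+1) => gaussianReal 0 1) 0
    have hmap_e : (stdG (p+1)).map e = (gaussianReal 0 1).prod (stdG p) := mp.map_eq
    set s := a 0 with hs
    set a' := fun j : Fin p => a (Fin.succ j) with ha'
    have hsum : s^2 + ∑ j, a' j ^ 2 = 1 := by
      rw [← ha, Fin.sum_univ_succ]
    have heval : ∀ b : Fin (p+1) → ℝ, e b = (b 0, fun j => b (Fin.succ j)) := by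
      intro b
      rw [he]
      simp only [MeasurableEquiv.piFinSuccAbove, MeasurableEquiv.coe_mk,
        Equiv.symm_symm]
      rfl
    by_cases hz : (∑ j, a' j ^ 2) = 0
    · have hz' : ∀ j, a' j = 0 := by
        intro j
        have := (Finset.sum_eq_zero_iff_of_nonneg (fun i _ => sq_nonneg (a' i))).mp hz j
          (Finset.mem_univ j)
        exact pow_eq_zero_iff (n := 2) (by norm_num) |>.mp this
      have hs2 : s^2 = 1 := by rw [← hsum, hz]; ring
      have hfun : dotL a = (fun z : ℝ => s * z) ∘ (fun b : Fin (p+1) → ℝ => b 0) := by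
        funext b
        simp only [dotL, Function.comp]
        rw [Fin.sum_univ_succ]
        have : ∀ j : Fin p, a (Fin.succ j) * b (Fin.succ j) = 0 := by
          intro j; rw [show a (Fin.succ j) = a' j from rfl, hz' j, zero_mul]
        simp [this, hs]
      have hev0 : (fun b : Fin (p+1) → ℝ => b 0) = Prod.fst ∘ e := by
        funext b; rw [Function.comp_apply, heval b]
      have hmap0 : (stdG (p+1)).map (fun b => b 0) = gaussianReal 0 1 := by
        rw [hev0, ← Measure.map_map measurable_fst e.measurable, hmap_e, Measure.map_fst_prod]
        simp
      rw [hfun, ← Measure.map_map (measurable_const_mul s) (measurable_pi_apply 0), hmap0,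
        gaussianReal_map_const_mul s]
      congr 1
      · ring
      · ext; simp [hs2]
    · set τ := Real.sqrt (∑ j, a' j ^ 2) with hτ
      have hτ2 : τ^2 = ∑ j, a' j ^ 2 := Real.sq_sqrt (Finset.sum_nonneg fun i _ => sq_nonneg _)
      have hτne : τ ≠ 0 := by
        rw [hτ]
        exact Real.sqrt_ne_zero'.mpr (lt_of_le_of_ne
          (Finset.sum_nonneg fun i _ => sq_nonneg _) (Ne.symm hz))
      set a'' := fun j : Fin p => a' j / τ with ha''
      have ha''sum : (∑ j, a'' j ^ 2) = 1 := by
        simp only [ha'', div_pow, ← Finset.sum_div, ← hτ2]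
        field_simp
      have hIH := IH a'' ha''sum
      have hlin : Measurable (fun q : ℝ × ℝ => s * q.1 + τ * q.2) := by fun_prop
      have hpm : Measurable (Prod.map (id : ℝ → ℝ) (dotL a'')) :=
        measurable_id.prodMap (measurable_dotL a'')
      have hfun : dotL a = (fun q : ℝ × ℝ => s * q.1 + τ * q.2)
          ∘ (Prod.map (id : ℝ → ℝ) (dotL a'')) ∘ e := by
        funext b
        rw [Function.comp_apply, Function.comp_apply, heval b]
        show dotL a b = s * b 0 + τ * dotL a'' (fun j => b (Fin.succ j))
        rw [dotL, Fin.sum_univ_succ, dotL, Finset.mul_sum]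
        congr 1
        refine Finset.sum_congr rfl fun j _ => ?_
        have : τ * (a'' j * b (Fin.succ j)) = a' j * b (Fin.succ j) := by
          rw [ha'']
          field_simp
        rw [this]
      rw [hfun, ← Function.comp_assoc, ← Measure.map_map (hlin.comp hpm) e.measurable, hmap_e,
        ← Measure.map_map hlin hpm,
        ← Measure.map_prod_map _ _ measurable_id (measurable_dotL a''), Measure.map_id, hIH]
      exact map_lin_prod_gaussian (by rw [hτ2]; exact hsum) hτne

lemma stdG_absdot_le {p : ℕ} (a : Fin p → ℝ) (h : ∑ j, a j ^ 2 = 1) {R : ℝ} (hR : 0 ≤ R) :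
    stdG p {b | |dotL a b| ≤ R} ≤ ENNReal.ofReal R := by
  have hset : {b : Fin p → ℝ | |dotL a b| ≤ R} = (dotL a) ⁻¹' (Set.Icc (-R) R) := by
    ext b; simp [abs_le]
  rw [hset, ← Measure.map_apply (measurable_dotL a) measurableSet_Icc, map_dotL_stdG p a h,
    gaussianReal_apply 0 one_ne_zero]
  have hpdf : ∀ u : ℝ, gaussianPDF 0 1 u ≤ ENNReal.ofReal ((Real.sqrt (2*π))⁻¹) := by
    intro u
    unfold gaussianPDF gaussianPDFReal
    refine ENNReal.ofReal_le_ofReal ?_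
    have h1 : rexp (-(u - 0)^2 / (2 * (1:ℝ≥0))) ≤ 1 := by
      rw [Real.exp_le_one_iff]
      exact div_nonpos_of_nonpos_of_nonneg (by nlinarith [sq_nonneg (u-0)]) (by norm_num)
    calc (√(2 * π * (1:ℝ≥0)))⁻¹ * rexp (-(u - 0)^2 / (2 * (1:ℝ≥0)))
        ≤ (√(2 * π * (1:ℝ≥0)))⁻¹ * 1 := by
          refine mul_le_mul_of_nonneg_left h1 (by positivity)
      _ = (√(2*π))⁻¹ := by norm_num
  calc ∫⁻ u in Set.Icc (-R) R, gaussianPDF 0 1 u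
      ≤ ∫⁻ _ in Set.Icc (-R) R, ENNReal.ofReal ((Real.sqrt (2*π))⁻¹) :=
        lintegral_mono fun u => hpdf u
    _ = ENNReal.ofReal ((Real.sqrt (2*π))⁻¹) * volume (Set.Icc (-R) R) := setLIntegral_const _ _
    _ = ENNReal.ofReal ((Real.sqrt (2*π))⁻¹) * ENNReal.ofReal (R - -R) := by
        rw [Real.volume_Icc]
    _ = ENNReal.ofReal ((Real.sqrt (2*π))⁻¹ * (2*R)) := by
        rw [← ENNReal.ofReal_mul (by positivity : (0:ℝ) ≤ (Real.sqrt (2*π))⁻¹)]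
        congr 1
        ring
    _ ≤ ENNReal.ofReal R := by
        refine ENNReal.ofReal_le_ofReal ?_
        have hs2 : (2:ℝ) ≤ Real.sqrt (2*π) := by
          nlinarith [Real.sq_sqrt (by positivity : (0:ℝ) ≤ 2*π), Real.sqrt_nonneg (2*π),
            Real.pi_gt_three, sq_nonneg (Real.sqrt (2*π) - 2), sq_nonneg (Real.sqrt (2*π) + 2)]
        have hspos : (0:ℝ) < Real.sqrt (2*π) := by positivity
        rw [inv_mul_eq_div, div_le_iff₀ hspos]
        nlinarith

lemma map_eval_pi {q : ℕ} {α : Type*} [MeasurableSpace α] (ν : Measure α)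
    [IsProbabilityMeasure ν] (r : Fin q) :
    (Measure.pi (fun _ : Fin q => ν)).map (fun B => B r) = ν := by
  cases q with
  | zero => exact r.elim0
  | succ p =>
    have mp := measurePreserving_piFinSuccAbove (fun _ : Fin (p+1) => ν) r
    set e := MeasurableEquiv.piFinSuccAbove (fun _ : Fin (p+1) => α) r with he
    have hev : (fun B : Fin (p+1) → α => B r) = Prod.fst ∘ e := by
      funext B
      rw [Function.comp_apply, he]
      simp [MeasurableEquiv.piFinSuccAbove, Fin.insertNthEquiv]
    rw [hev, ← Measure.map_map measurable_fst e.measurable, mp.map_eq, Measure.map_fst_prod]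
    simp


end Stmt3Aux

theorem stmt3 :
    ∃ c : ℝ, 0 < c ∧
    ∀ (n d ℓ m : ℕ), 0 < n → 0 < m →
    ∀ X : Fin n → Fin d → ℝ, (∀ i, ∑ j, X i j ^ 2 = 1) →
    ∀ C : Fin ℓ → Fin d → ℝ,
      (∀ i, eunorm (mvec C (X i)) = 1) → (∀ i j, |dotC X C i j| ≤ 2) →
    ∀ δ lam0 : ℝ, 0 < δ → δ < 1 → 0 < lam0 →
    1 - δ ≤
      ((gaussMatrix m ℓ 1)
        {B0 : Fin m → Fin ℓ → ℝ |
          lam0 / 2 ≤ lamMin (HFac X C B0) →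
          ∀ B : Fin m → Fin ℓ → ℝ,
            (∀ r, eunorm (fun q => vmul (B r) C q - vmul (B0 r) C q) ≤
              c * δ * lam0 / (n : ℝ) ^ 2) →
            specNorm (fun i j => HFac X C B i j - HFac X C B0 i j) ≤ lam0 / 4 ∧
              lam0 / 4 ≤ lamMin (HFac X C B)}).toReal := by
  classical
  refine ⟨1/32, by norm_num, ?_⟩
  intro n d ℓ m hn hm X hX C hC1 hC2 δ lam0 hδ hδ1 hl
  have hnR : (0:ℝ) < n := by exact_mod_cast hn
  have hmR : (0:ℝ) < m := by exact_mod_cast hm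
  set R : ℝ := 1/32 * δ * lam0 / (n:ℝ)^2 with hRdef
  have hR : 0 ≤ R := by positivity
  set t : ℝ := (m:ℝ) * lam0 / (16 * (n:ℝ)) with htdef
  have ht : 0 < t := by positivity
  set a : Fin n → Fin ℓ → ℝ := fun i => mvec C (X i) with hadef
  have ha : ∀ i, ∑ q, a i q ^ 2 = 1 := by
    intro i
    have h0 : (0:ℝ) ≤ ∑ q, a i q ^ 2 := Finset.sum_nonneg fun q _ => sq_nonneg _
    have h1 := hC1 i
    unfold eunorm at h1
    calc ∑ q, a i q ^ 2 = (Real.sqrt (∑ q, a i q ^ 2))^2 := (Real.sq_sqrt h0).symm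
      _ = 1 := by rw [show Real.sqrt (∑ q, a i q ^ 2) = 1 from h1]; norm_num
  set T : Fin n → Set (Fin ℓ → ℝ) := fun i => {b | |dot (a i) b| ≤ R} with hT
  have hTmeas : ∀ i, MeasurableSet (T i) := by
    intro i
    have hpre : T i = (fun b => dot (a i) b) ⁻¹' (Set.Icc (-R) R) := by
      ext b
      simp [hT, abs_le, Set.mem_setOf_eq]
    rw [hpre]
    exact (Stmt3Aux.measurable_dot_left _) measurableSet_Icc
  set A : Fin m → Fin n → Set (Fin m → Fin ℓ → ℝ) :=
    fun r i => (fun B0 : Fin m → Fin ℓ → ℝ => B0 r) ⁻¹' (T i) with hA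
  have hAmeas : ∀ r i, MeasurableSet (A r i) := fun r i => (measurable_pi_apply r) (hTmeas i)
  set Sen : (Fin m → Fin ℓ → ℝ) → ℝ≥0∞ :=
    fun B0 => ∑ r, ∑ i, Set.indicator (A r i) (fun _ => (1:ℝ≥0∞)) B0 with hSen
  have hSenMeas : Measurable Sen :=
    Finset.measurable_sum _ fun r _ => Finset.measurable_sum _ fun i _ =>
      measurable_const.indicator (hAmeas r i)
  have hmarg : ∀ r i, (gaussMatrix m ℓ 1) (A r i) ≤ ENNReal.ofReal R := by
    intro r i
    have h2 : (gaussMatrix m ℓ 1).map (fun B0 : Fin m → Fin ℓ → ℝ => B0 r) = stdGaussian ℓ :=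
      Stmt3Aux.map_eval_pi (stdGaussian ℓ) r
    have h1 : (gaussMatrix m ℓ 1) (A r i) = (stdGaussian ℓ) (T i) := by
      rw [hA, ← Measure.map_apply (measurable_pi_apply r) (hTmeas i), h2]
    rw [h1]
    exact Stmt3Aux.stdG_absdot_le (a i) (ha i) hR
  have hlint : ∫⁻ B0, Sen B0 ∂(gaussMatrix m ℓ 1)
      ≤ (m : ℝ≥0∞) * ((n : ℝ≥0∞) * ENNReal.ofReal R) := by
    rw [hSen]
    rw [lintegral_finset_sum _ (fun r _ => Finset.measurable_sum _ fun i _ =>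
      measurable_const.indicator (hAmeas r i))]
    have hrow1 : ∀ r : Fin m, (∫⁻ B0, ∑ i, Set.indicator (A r i) (fun _ => (1:ℝ≥0∞)) B0
        ∂(gaussMatrix m ℓ 1)) ≤ (n : ℝ≥0∞) * ENNReal.ofReal R := by
      intro r
      rw [lintegral_finset_sum _ (fun i _ => measurable_const.indicator (hAmeas r i))]
      calc ∑ i, ∫⁻ B0, Set.indicator (A r i) (fun _ => (1:ℝ≥0∞)) B0 ∂(gaussMatrix m ℓ 1)
          = ∑ i, (gaussMatrix m ℓ 1) (A r i) := by
            refine Finset.sum_congr rfl fun i _ => ?_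
            rw [lintegral_indicator_const (hAmeas r i), one_mul]
        _ ≤ ∑ _i : Fin n, ENNReal.ofReal R := Finset.sum_le_sum fun i _ => hmarg r i
        _ = (n : ℝ≥0∞) * ENNReal.ofReal R := by
            rw [Finset.sum_const, Finset.card_univ, Fintype.card_fin, nsmul_eq_mul]
    calc ∑ r, ∫⁻ B0, (∑ i, Set.indicator (A r i) (fun _ => (1:ℝ≥0∞)) B0) ∂(gaussMatrix m ℓ 1)
        ≤ ∑ _r : Fin m, (n : ℝ≥0∞) * ENNReal.ofReal R := Finset.sum_le_sum fun r _ => hrow1 r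
      _ = (m : ℝ≥0∞) * ((n : ℝ≥0∞) * ENNReal.ofReal R) := by
          rw [Finset.sum_const, Finset.card_univ, Fintype.card_fin, nsmul_eq_mul]
  set Bad : Set (Fin m → Fin ℓ → ℝ) := {B0 | ENNReal.ofReal t ≤ Sen B0} with hBad
  have hBadMeas : MeasurableSet Bad := measurableSet_le measurable_const hSenMeas
  have hBadLe : (gaussMatrix m ℓ 1) Bad ≤ ENNReal.ofReal (δ/2) := by
    have hmark := mul_meas_ge_le_lintegral₀ (μ := gaussMatrix m ℓ 1)
      hSenMeas.aemeasurable (ENNReal.ofReal t)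
    have hprod : (m : ℝ≥0∞) * ((n : ℝ≥0∞) * ENNReal.ofReal R)
        = ENNReal.ofReal t * ENNReal.ofReal (δ/2) := by
      rw [← ENNReal.ofReal_natCast m, ← ENNReal.ofReal_natCast n,
        ← ENNReal.ofReal_mul (by positivity), ← ENNReal.ofReal_mul (by positivity),
        ← ENNReal.ofReal_mul (by positivity)]
      congr 1
      rw [hRdef, htdef]
      field_simp
      ring
    have h2 : ENNReal.ofReal t * (gaussMatrix m ℓ 1) Bad
        ≤ ENNReal.ofReal t * ENNReal.ofReal (δ/2) :=
      le_trans hmark (le_trans hlint (le_of_eq hprod))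
    exact (ENNReal.mul_le_mul_iff_right (ENNReal.ofReal_pos.mpr ht).ne' ENNReal.ofReal_ne_top).mp h2
  have hsub : Badᶜ ⊆ {B0 : Fin m → Fin ℓ → ℝ |
      lam0 / 2 ≤ lamMin (HFac X C B0) →
      ∀ B : Fin m → Fin ℓ → ℝ,
        (∀ r, eunorm (fun q => vmul (B r) C q - vmul (B0 r) C q) ≤ R) →
        specNorm (fun i j => HFac X C B i j - HFac X C B0 i j) ≤ lam0 / 4 ∧
          lam0 / 4 ≤ lamMin (HFac X C B)} := by
    intro B0 hB0
    simp only [Set.mem_setOf_eq]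
    intro hmin B hBrow
    have hlt : Sen B0 < ENNReal.ofReal t := lt_of_not_ge (fun hc => hB0 hc)
    have hsen_eq : Sen B0 = ENNReal.ofReal
        (∑ r, ∑ i, if |dot (B0 r) (mvec C (X i))| ≤ R then (1:ℝ) else 0) := by
      rw [hSen, ENNReal.ofReal_sum_of_nonneg
        (fun r _ => Finset.sum_nonneg fun i _ => by positivity)]
      refine Finset.sum_congr rfl fun r _ => ?_
      rw [ENNReal.ofReal_sum_of_nonneg (fun i _ => by positivity)]
      refine Finset.sum_congr rfl fun i _ => ?_
      rw [Set.indicator_apply]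
      have hmem : B0 ∈ A r i ↔ |dot (B0 r) (mvec C (X i))| ≤ R := by
        rw [hA]
        simp only [Set.mem_preimage, hT, Set.mem_setOf_eq]
        rw [Stmt3Aux.dot_comm]
      by_cases hc : |dot (B0 r) (mvec C (X i))| ≤ R
      · rw [if_pos (hmem.mpr hc), if_pos hc, ENNReal.ofReal_one]
      · rw [if_neg (fun hmem' => hc (hmem.mp hmem')), if_neg hc, ENNReal.ofReal_zero]
    rw [hsen_eq] at hlt
    have hcount : (∑ r, ∑ i, if |dot (B0 r) (mvec C (X i))| ≤ R then (1:ℝ) else 0) ≤ t := by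
      by_contra hcon
      push_neg at hcon
      exact absurd (ENNReal.ofReal_le_ofReal hcon.le) (not_le.mpr hlt)
    exact Stmt3Aux.det_main hn hm X hX C hC2 lam0 R hl hR B0 B hBrow hcount hmin
  have hμT := measure_mono (μ := gaussMatrix m ℓ 1) hsub
  have hco : (gaussMatrix m ℓ 1) Badᶜ = 1 - (gaussMatrix m ℓ 1) Bad :=
    prob_compl_eq_one_sub hBadMeas
  have h1 : 1 - δ ≤ ((gaussMatrix m ℓ 1) Badᶜ).toReal := by
    rw [hco, ENNReal.toReal_sub_of_le prob_le_one ENNReal.one_ne_top]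
    have h3 : ((gaussMatrix m ℓ 1) Bad).toReal ≤ δ/2 := by
      have h4 := ENNReal.toReal_mono ENNReal.ofReal_ne_top hBadLe
      rwa [ENNReal.toReal_ofReal (by positivity)] at h4
    simp only [ENNReal.toReal_one]
    linarith
  exact le_trans h1 (ENNReal.toReal_mono (measure_ne_top _ _) hμT)

end
end

section
/- Fix R > 0, indices i, j ∈ [n], and a matrix C ∈ ℝ^{ℓ×d} with ‖C X_iᵀ‖ = 1 for all i and |X_i Cᵀ C X_jᵀ| ≤ 2 for all i, j. Let B(0) ∈ ℝ^{m×ℓ} have i.i.d. N(0,1) entries. Then the expectation over B(0) of the supremum, over all B ∈ ℝ^{m×ℓ} with ‖B_r C − B_r(0) C‖ ≤ R for every r ∈ [m], of |H(B)_{ij} − H(B(0))_{ij}| is at most C₀·R, where C₀ > 0 is an absolute constant. -/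
open MeasureTheory ProbabilityTheory Real
open scoped NNReal

noncomputable section

open scoped ENNReal

lemma gpdf_prod {a b : ℝ≥0} (ha : a ≠ 0) (hb : b ≠ 0) (x y : ℝ) :
    gaussianPDFReal 0 a x * gaussianPDFReal 0 b (y - x) =
      gaussianPDFReal 0 (a + b) y *
        gaussianPDFReal ((a : ℝ) * y / ((a : ℝ) + b)) (a * b / (a + b)) x := by
  have hA : (0:ℝ) < a := lt_of_le_of_ne a.coe_nonneg (by exact_mod_cast (Ne.symm ha))
  have hB : (0:ℝ) < b := lt_of_le_of_ne b.coe_nonneg (by exact_mod_cast (Ne.symm hb))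
  have hAB : (0:ℝ) < (a:ℝ) + b := by linarith
  have hcoe : ((a * b / (a + b) : ℝ≥0) : ℝ) = (a:ℝ) * b / ((a:ℝ) + b) := by
    push_cast; ring
  have hpi : (0:ℝ) < 2 * π := by positivity
  unfold gaussianPDFReal
  rw [hcoe]
  push_cast
  rw [mul_mul_mul_comm, mul_mul_mul_comm (√(2 * π * ((a:ℝ) + b)))⁻¹, ← Real.exp_add, ← Real.exp_add]
  have hsq : (√(2 * π * (a:ℝ)))⁻¹ * (√(2 * π * (b:ℝ)))⁻¹
      = (√(2 * π * ((a:ℝ) + b)))⁻¹ * (√(2 * π * ((a:ℝ) * b / ((a:ℝ)+b))))⁻¹ := by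
    rw [← mul_inv, ← mul_inv, ← Real.sqrt_mul (by positivity), ← Real.sqrt_mul (by positivity)]
    congr 1
    congr 1
    field_simp
  rw [hsq]
  congr 1
  congr 1
  field_simp
  ring

lemma gaussian_conv (a b : ℝ≥0) :
    Measure.map (fun p : ℝ × ℝ => p.1 + p.2) ((gaussianReal 0 a).prod (gaussianReal 0 b)) =
      gaussianReal 0 (a + b) := by
  by_cases ha : a = 0
  · subst ha
    rw [gaussianReal_zero_var, Measure.dirac_prod,
      Measure.map_map measurable_add measurable_prodMk_left]
    simp [Function.comp_def]
  by_cases hb : b = 0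
  · subst hb
    rw [gaussianReal_zero_var, Measure.prod_dirac,
      Measure.map_map measurable_add measurable_prodMk_right]
    simp [Function.comp_def]
  have hab : a + b ≠ 0 := fun h => ha (by simpa using (add_eq_zero.mp h).1)
  set v' : ℝ≥0 := a * b / (a + b) with hv'def
  have hv' : v' ≠ 0 := by
    simp only [hv'def, ne_eq, div_eq_zero_iff, mul_eq_zero]
    push_neg
    exact ⟨⟨ha, hb⟩, hab⟩
  ext s hs
  set I : ℝ → ℝ≥0∞ := s.indicator (fun _ => (1:ℝ≥0∞)) with hIdef
  have hI : Measurable I := measurable_const.indicator hs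
  have hF : Measurable (fun p : ℝ × ℝ => I p.2 * gaussianPDF 0 b (p.2 - p.1) *
      gaussianPDF 0 a p.1) :=
    ((hI.comp measurable_snd).mul
      ((measurable_gaussianPDF 0 b).comp (measurable_snd.sub measurable_fst))).mul
      ((measurable_gaussianPDF 0 a).comp measurable_fst)
  rw [Measure.map_apply measurable_add hs, Measure.prod_apply (measurable_add hs)]
  have inner : ∀ x : ℝ, gaussianReal 0 b (Prod.mk x ⁻¹' ((fun p : ℝ × ℝ => p.1 + p.2) ⁻¹' s))
      = ∫⁻ y, I y * gaussianPDF 0 b (y - x) := by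
    intro x
    have hpre : (Prod.mk x ⁻¹' ((fun p : ℝ × ℝ => p.1 + p.2) ⁻¹' s))
        = (fun y => x + y) ⁻¹' s := rfl
    have hmeas : MeasurableSet ((fun y => x + y) ⁻¹' s) := (measurable_const_add x) hs
    rw [hpre, gaussianReal_of_var_ne_zero 0 hb, withDensity_apply _ hmeas,
        ← lintegral_indicator hmeas]
    have h1 : ∀ y, ((fun y => x + y) ⁻¹' s).indicator (gaussianPDF 0 b) y
        = I (x + y) * gaussianPDF 0 b y := by
      intro y
      simp only [Set.indicator_apply, Set.mem_preimage, hIdef]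
      by_cases h : x + y ∈ s <;> simp [h]
    rw [lintegral_congr h1]
    calc ∫⁻ y, I (x + y) * gaussianPDF 0 b y
        = ∫⁻ y, I (y + x) * gaussianPDF 0 b (y + x - x) := by
          apply lintegral_congr; intro y
          rw [add_comm x y, add_sub_cancel_right]
      _ = ∫⁻ y, I y * gaussianPDF 0 b (y - x) :=
          lintegral_add_right_eq_self (fun z => I z * gaussianPDF 0 b (z - x)) x
  have hG : Measurable (fun x : ℝ => ∫⁻ y, I y * gaussianPDF 0 b (y - x)) := by
    exact Measurable.lintegral_prod_right'
      (f := fun p : ℝ × ℝ => I p.2 * gaussianPDF 0 b (p.2 - p.1))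
      ((hI.comp measurable_snd).mul
        ((measurable_gaussianPDF 0 b).comp (measurable_snd.sub measurable_fst)))
  rw [lintegral_congr inner, gaussianReal_of_var_ne_zero 0 ha,
    lintegral_withDensity_eq_lintegral_mul volume (measurable_gaussianPDF 0 a) hG]
  have step : ∀ x : ℝ, (gaussianPDF 0 a * fun x => ∫⁻ y, I y * gaussianPDF 0 b (y - x)) x
      = ∫⁻ y, I y * gaussianPDF 0 b (y - x) * gaussianPDF 0 a x := by
    intro x
    simp only [Pi.mul_apply]
    rw [lintegral_mul_const' (gaussianPDF 0 a x) _ ENNReal.ofReal_ne_top, mul_comm]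
  rw [lintegral_congr step,
    lintegral_lintegral_swap hF.aemeasurable]
  have inner2 : ∀ y : ℝ, ∫⁻ x, I y * gaussianPDF 0 b (y - x) * gaussianPDF 0 a x
      = I y * gaussianPDF 0 (a + b) y := by
    intro y
    have hpt : ∀ x : ℝ, gaussianPDF 0 b (y - x) * gaussianPDF 0 a x
        = gaussianPDF 0 (a + b) y * gaussianPDF ((a : ℝ) * y / ((a : ℝ) + b)) v' x := by
      intro x
      simp only [gaussianPDF]
      rw [← ENNReal.ofReal_mul (gaussianPDFReal_nonneg _ _ _), mul_comm,
        gpdf_prod ha hb x y, ENNReal.ofReal_mul (gaussianPDFReal_nonneg _ _ _)]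
    simp only [mul_assoc]
    have hIy : I y ≠ ⊤ := by
      rw [hIdef]; by_cases h : y ∈ s <;> simp [h]
    rw [lintegral_const_mul' _ _ hIy]
    congr 1
    rw [lintegral_congr hpt,
      lintegral_const_mul' _ _ (by simp [gaussianPDF] : gaussianPDF 0 (a + b) y ≠ ⊤),
      lintegral_gaussianPDF_eq_one _ hv', mul_one]
  rw [lintegral_congr inner2, gaussianReal_of_var_ne_zero 0 hab, withDensity_apply _ hs,
    ← lintegral_indicator hs]
  apply lintegral_congr
  intro y
  simp only [Set.indicator_apply, hIdef]
  by_cases h : y ∈ s <;> simp [h]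

lemma measurable_dot {p : ℕ} (u : Fin p → ℝ) :
    Measurable (fun b : Fin p → ℝ => dot b u) := by
  unfold dot
  exact Finset.measurable_sum _ (fun q _ => by fun_prop)

lemma map_dot (ℓ : ℕ) (u : Fin ℓ → ℝ) :
    Measure.map (fun b => dot b u) (stdGaussian ℓ)
      = gaussianReal 0 (∑ q, u q ^ 2).toNNReal := by
  induction ℓ with
  | zero =>
      have h0 : (fun b : Fin 0 → ℝ => dot b u) = fun _ => (0:ℝ) := by
        funext b; simp [dot]
      rw [h0, Measure.map_const]
      simp
  | succ ℓ ih =>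
      set u' : Fin ℓ → ℝ := fun j => u j.succ with hu'
      have key := (measurePreserving_piFinSuccAbove
        (fun _ : Fin (ℓ+1) => gaussianReal 0 1) 0).map_eq
      have hcomp : (fun b : Fin (ℓ+1) → ℝ => dot b u)
          = ((fun p : ℝ × ℝ => p.1 + p.2)
              ∘ (Prod.map (fun x : ℝ => u 0 * x) (fun y : Fin ℓ → ℝ => dot y u')))
            ∘ (MeasurableEquiv.piFinSuccAbove (fun _ : Fin (ℓ+1) => ℝ) 0) := by
        funext b
        simp [dot, MeasurableEquiv.piFinSuccAbove, Fin.insertNthEquiv, Fin.removeNth,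
          Fin.sum_univ_succ, Fin.zero_succAbove, Fin.tail, mul_comm, hu']
      have hme : Measurable (Prod.map (fun x : ℝ => u 0 * x)
          (fun y : Fin ℓ → ℝ => dot y u')) :=
        (by fun_prop : Measurable fun x : ℝ => u 0 * x).prodMap (measurable_dot u')
      rw [hcomp,
        ← Measure.map_map (measurable_add.comp hme) (MeasurableEquiv.measurable _)]
      have hstd : Measure.map (⇑(MeasurableEquiv.piFinSuccAbove (fun _ : Fin (ℓ+1) => ℝ) 0))
          (stdGaussian (ℓ+1)) = ((gaussianReal 0 1).prod (stdGaussian ℓ)) := key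
      rw [hstd, ← Measure.map_map measurable_add hme,
        ← Measure.map_prod_map _ _ (by fun_prop : Measurable fun x : ℝ => u 0 * x) (measurable_dot u')]
      have h1 : Measure.map (fun x : ℝ => u 0 * x) (gaussianReal 0 1)
          = gaussianReal 0 (⟨(u 0)^2, sq_nonneg _⟩ * 1) := by
        have := gaussianReal_map_const_mul (μ := 0) (v := 1) (u 0)
        rw [mul_zero] at this; exact this
      rw [h1, ih, gaussian_conv]
      congr 1
      apply NNReal.coe_injective
      push_cast
      rw [Real.coe_toNNReal _ (by positivity), Real.coe_toNNReal _ (by positivity),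
        Fin.sum_univ_succ]
      simp [hu']
      exact mul_one ((u 0) ^ 2)

lemma slab_bound {ℓ : ℕ} (u : Fin ℓ → ℝ) (hu : ∑ q, u q ^ 2 = 1) {R : ℝ} (hR : 0 < R) :
    ∫ b, ind (|dot b u| ≤ R) ∂ stdGaussian ℓ ≤ R := by
  have hsetIcc : {b : Fin ℓ → ℝ | |dot b u| ≤ R}
      = (fun b => dot b u) ⁻¹' (Set.Icc (-R) R) := by
    ext b; simp [abs_le]
  have hset : MeasurableSet {b : Fin ℓ → ℝ | |dot b u| ≤ R} := by
    rw [hsetIcc]; exact (measurable_dot u) measurableSet_Icc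
  have hind : (fun b : Fin ℓ → ℝ => ind (|dot b u| ≤ R))
      = Set.indicator {b | |dot b u| ≤ R} (1 : (Fin ℓ → ℝ) → ℝ) := by
    funext b
    by_cases h : |dot b u| ≤ R <;> simp [ind, h, Set.indicator_apply]
  rw [hind, integral_indicator_one hset]
  have hmeas : stdGaussian ℓ {b | |dot b u| ≤ R} = gaussianReal 0 1 (Set.Icc (-R) R) := by
    rw [hsetIcc, ← Measure.map_apply (measurable_dot u) measurableSet_Icc, map_dot, hu]
    norm_num
  have hb : gaussianReal 0 1 (Set.Icc (-R) R) ≤ ENNReal.ofReal R := by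
    rw [gaussianReal_apply 0 one_ne_zero]
    have hpdf : ∀ x : ℝ, gaussianPDF 0 1 x ≤ ENNReal.ofReal (1/2) := by
      intro x
      apply ENNReal.ofReal_le_ofReal
      unfold gaussianPDFReal
      have h2 : (2:ℝ) ≤ √(2 * π * (1:ℝ≥0)) := by
        rw [show (2 * π * ((1:ℝ≥0):ℝ)) = 2 * π by norm_num]
        nlinarith [Real.sq_sqrt (show (0:ℝ) ≤ 2*π by positivity),
          Real.sqrt_nonneg (2*π), Real.pi_gt_three]
      have hexp : rexp (-(x - 0)^2 / (2 * (1:ℝ≥0))) ≤ 1 := by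
        rw [Real.exp_le_one_iff]
        have : (0:ℝ) ≤ (x - 0)^2 := sq_nonneg _
        have h1 : (0:ℝ) < 2 * (1:ℝ≥0) := by norm_num
        apply div_nonpos_of_nonpos_of_nonneg <;> [skip; positivity]
        simpa using neg_nonpos_of_nonneg this
      calc (√(2 * π * (1:ℝ≥0)))⁻¹ * rexp (-(x - 0)^2 / (2 * (1:ℝ≥0)))
          ≤ (√(2 * π * (1:ℝ≥0)))⁻¹ * 1 := by
            apply mul_le_mul_of_nonneg_left hexp
            positivity
        _ ≤ 1/2 := by
            rw [mul_one]
            rw [inv_le_comm₀ (by linarith) (by norm_num)]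
            linarith
    calc ∫⁻ x in Set.Icc (-R) R, gaussianPDF 0 1 x
        ≤ ∫⁻ _ in Set.Icc (-R) R, ENNReal.ofReal (1/2) :=
          setLIntegral_mono measurable_const (fun x _ => hpdf x)
      _ = ENNReal.ofReal (1/2) * volume (Set.Icc (-R) R) := by
          rw [setLIntegral_const]
      _ = ENNReal.ofReal (1/2) * ENNReal.ofReal (R - -R) := by rw [Real.volume_Icc]
      _ ≤ ENNReal.ofReal R := by
          rw [← ENNReal.ofReal_mul (by norm_num)]
          apply ENNReal.ofReal_le_ofReal
          linarith
  rw [measureReal_def, hmeas]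
  calc (gaussianReal 0 1 (Set.Icc (-R) R)).toReal
      ≤ (ENNReal.ofReal R).toReal := ENNReal.toReal_mono ENNReal.ofReal_ne_top hb
    _ = R := ENNReal.toReal_ofReal hR.le

lemma map_eval {m : ℕ} {α : Type*} [MeasurableSpace α] (μ : Measure α)
    [IsProbabilityMeasure μ] (r : Fin m) :
    Measure.map (fun f : Fin m → α => f r) (Measure.pi fun _ => μ) = μ := by
  ext s hs
  rw [Measure.map_apply (measurable_pi_apply r) hs]
  have hpre : (fun f : Fin m → α => f r) ⁻¹' s
      = Set.pi Set.univ (Function.update (fun _ : Fin m => Set.univ) r s) := by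
    ext f
    simp only [Set.mem_preimage, Set.mem_pi, Set.mem_univ, true_implies]
    constructor
    · intro h i
      rcases eq_or_ne i r with rfl | hir
      · simpa [Function.update] using h
      · simp [Function.update, hir]
    · intro h
      simpa [Function.update] using h r
  rw [hpre, Measure.pi_pi]
  have hfac : ∀ i : Fin m, μ (Function.update (fun _ : Fin m => Set.univ) r s i)
      = if i = r then μ s else 1 := by
    intro i
    rcases eq_or_ne i r with rfl | hir
    · simp [Function.update]
    · simp [Function.update, hir]
  rw [Finset.prod_congr rfl (fun i _ => hfac i)]
  simp

lemma integral_eval {m : ℕ} {α : Type*} [MeasurableSpace α] (μ : Measure α)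
    [IsProbabilityMeasure μ] (r : Fin m) (h : α → ℝ) (hh : Measurable h) :
    ∫ f, h (f r) ∂ (Measure.pi fun _ : Fin m => μ) = ∫ x, h x ∂ μ := by
  have key := integral_map (μ := Measure.pi fun _ : Fin m => μ) (φ := fun f => f r)
    (measurable_pi_apply r).aemeasurable (f := h)
    (by rw [map_eval]; exact hh.aestronglyMeasurable)
  rw [map_eval] at key
  exact key.symm

lemma ind_nonneg (P : Prop) : 0 ≤ ind P := by
  unfold ind; split <;> norm_num

lemma ind_le_one (P : Prop) : ind P ≤ 1 := by
  unfold ind; split <;> norm_num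

lemma ind_flip {a a0 R : ℝ} (h : |a - a0| ≤ R) :
    |ind (0 ≤ a) - ind (0 ≤ a0)| ≤ ind (|a0| ≤ R) := by
  rcases abs_le.mp h with ⟨h1, h2⟩
  rcases le_or_gt 0 a with ha | ha <;> rcases le_or_gt 0 a0 with ha0 | ha0
  · simp only [ind, if_pos ha, if_pos ha0, sub_self, abs_zero]
    exact ind_nonneg _
  · have hR : |a0| ≤ R := by rw [abs_of_neg ha0]; linarith
    simp only [ind, if_pos ha, if_neg (not_le.mpr ha0), if_pos hR]
    norm_num
  · have hR : |a0| ≤ R := by rw [abs_of_nonneg ha0]; linarith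
    simp only [ind, if_neg (not_le.mpr ha), if_pos ha0, if_pos hR]
    norm_num
  · simp only [ind, if_neg (not_le.mpr ha), if_neg (not_le.mpr ha0), sub_self, abs_zero]
    exact ind_nonneg _

lemma ind_prod_diff {p p0 q q0 : ℝ} (hp : 0 ≤ p0) (hp1 : p0 ≤ 1) (hq : 0 ≤ q) (hq1 : q ≤ 1) :
    |p * q - p0 * q0| ≤ |p - p0| + |q - q0| := by
  have hsplit : p * q - p0 * q0 = (p - p0) * q + p0 * (q - q0) := by ring
  rw [hsplit]
  calc |(p - p0) * q + p0 * (q - q0)| ≤ |(p - p0) * q| + |p0 * (q - q0)| := abs_add_le _ _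
    _ = |p - p0| * |q| + |p0| * |q - q0| := by rw [abs_mul, abs_mul]
    _ ≤ |p - p0| * 1 + 1 * |q - q0| := by
        gcongr
        · rw [abs_of_nonneg hq]; exact hq1
        · rw [abs_of_nonneg hp]; exact hp1
    _ = |p - p0| + |q - q0| := by ring

lemma dot_mvec_eq {a d : ℕ} (w : Fin a → ℝ) (C : Fin a → Fin d → ℝ) (x : Fin d → ℝ) :
    dot w (mvec C x) = dot (vmul w C) x := by
  unfold dot mvec vmul
  calc ∑ q, w q * ∑ p, C q p * x p = ∑ q, ∑ p, w q * (C q p * x p) := by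
        exact Finset.sum_congr rfl fun q _ => Finset.mul_sum _ _ _
    _ = ∑ p, ∑ q, w q * (C q p * x p) := Finset.sum_comm
    _ = ∑ p, (∑ q, w q * C q p) * x p := by
        refine Finset.sum_congr rfl fun p _ => ?_
        rw [Finset.sum_mul]
        exact Finset.sum_congr rfl fun q _ => by ring

lemma dot_sub {p : ℕ} (v w x : Fin p → ℝ) :
    dot (fun q => v q - w q) x = dot v x - dot w x := by
  unfold dot
  rw [← Finset.sum_sub_distrib]
  exact Finset.sum_congr rfl fun q _ => by ring

lemma abs_dot_le {p : ℕ} (v x : Fin p → ℝ) : |dot v x| ≤ eunorm v * eunorm x := by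
  unfold dot eunorm
  rw [← Real.sqrt_mul (by positivity), ← Real.sqrt_sq_eq_abs]
  exact Real.sqrt_le_sqrt (Finset.sum_mul_sq_le_sq_mul_sq _ _ _)

lemma measurable_indSlab {p : ℕ} (u : Fin p → ℝ) (R : ℝ) :
    Measurable (fun b : Fin p → ℝ => ind (|dot b u| ≤ R)) := by
  have hs : MeasurableSet {b : Fin p → ℝ | |dot b u| ≤ R} :=
    (measurable_dot u).abs measurableSet_Iic
  have heq : (fun b : Fin p → ℝ => ind (|dot b u| ≤ R))
      = Set.indicator {b | |dot b u| ≤ R} (1 : (Fin p → ℝ) → ℝ) := by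
    funext b
    by_cases h : |dot b u| ≤ R <;> simp [ind, h, Set.indicator_apply]
  rw [heq]
  exact measurable_one.indicator hs


theorem stmt4 :
    ∃ C₀ : ℝ, 0 < C₀ ∧
    ∀ (n d ℓ m : ℕ), 0 < m →
    ∀ X : Fin n → Fin d → ℝ, (∀ i, ∑ j, X i j ^ 2 = 1) →
    ∀ C : Fin ℓ → Fin d → ℝ,
      (∀ i, eunorm (mvec C (X i)) = 1) → (∀ i j, |dotC X C i j| ≤ 2) →
    ∀ R : ℝ, 0 < R → ∀ i j : Fin n,
    (∫ B0, sSup {w : ℝ | ∃ B : Fin m → Fin ℓ → ℝ,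
        (∀ r, eunorm (fun q => vmul (B r) C q - vmul (B0 r) C q) ≤ R) ∧
        w = |HFac X C B i j - HFac X C B0 i j|} ∂ gaussMatrix m ℓ 1) ≤ C₀ * R := by
  refine ⟨4, by norm_num, ?_⟩
  intro n d ℓ m hm X hX C hC1 hC2 R hR i j
  set ui : Fin ℓ → ℝ := mvec C (X i) with hui
  set uj : Fin ℓ → ℝ := mvec C (X j) with huj
  -- sums of squares
  have hsumi : ∑ q, ui q ^ 2 = 1 := by
    have h := hC1 i
    rw [eunorm] at h
    have hnn : 0 ≤ ∑ q, ui q ^ 2 := by positivity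
    nlinarith [Real.sq_sqrt hnn]
  have hsumj : ∑ q, uj q ^ 2 = 1 := by
    have h := hC1 j
    rw [eunorm] at h
    have hnn : 0 ≤ ∑ q, uj q ^ 2 := by positivity
    nlinarith [Real.sq_sqrt hnn]
  have heXi : eunorm (X i) = 1 := by rw [eunorm, hX i, Real.sqrt_one]
  have heXj : eunorm (X j) = 1 := by rw [eunorm, hX j, Real.sqrt_one]
  -- the dominating function
  set g : (Fin m → Fin ℓ → ℝ) → ℝ := fun B0 => (m:ℝ)⁻¹ *
    ∑ r, 2 * (ind (|dot (B0 r) ui| ≤ R) + ind (|dot (B0 r) uj| ≤ R)) with hg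
  -- pointwise bound on elements of the sup set
  have hub : ∀ B0 : Fin m → Fin ℓ → ℝ, ∀ w ∈ {w : ℝ | ∃ B : Fin m → Fin ℓ → ℝ,
      (∀ r, eunorm (fun q => vmul (B r) C q - vmul (B0 r) C q) ≤ R) ∧
      w = |HFac X C B i j - HFac X C B0 i j|}, w ≤ g B0 := by
    rintro B0 w ⟨B, hB, rfl⟩
    have hdiff : ∀ (x : Fin d → ℝ) (hx : eunorm x = 1) (r : Fin m),
        |dot (B r) (mvec C x) - dot (B0 r) (mvec C x)| ≤ R := by
      intro x hx r
      rw [dot_mvec_eq, dot_mvec_eq, ← dot_sub]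
      calc |dot (fun q => vmul (B r) C q - vmul (B0 r) C q) x|
          ≤ eunorm (fun q => vmul (B r) C q - vmul (B0 r) C q) * eunorm x :=
            abs_dot_le _ _
        _ ≤ R := by rw [hx, mul_one]; exact hB r
    have hterm : ∀ r : Fin m,
        |dotC X C i j * ind (0 ≤ dot (B r) ui) * ind (0 ≤ dot (B r) uj)
          - dotC X C i j * ind (0 ≤ dot (B0 r) ui) * ind (0 ≤ dot (B0 r) uj)|
        ≤ 2 * (ind (|dot (B0 r) ui| ≤ R) + ind (|dot (B0 r) uj| ≤ R)) := by
      intro r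
      have hfac : dotC X C i j * ind (0 ≤ dot (B r) ui) * ind (0 ≤ dot (B r) uj)
          - dotC X C i j * ind (0 ≤ dot (B0 r) ui) * ind (0 ≤ dot (B0 r) uj)
          = dotC X C i j * (ind (0 ≤ dot (B r) ui) * ind (0 ≤ dot (B r) uj)
            - ind (0 ≤ dot (B0 r) ui) * ind (0 ≤ dot (B0 r) uj)) := by ring
      rw [hfac, abs_mul]
      have h1 : |ind (0 ≤ dot (B r) ui) * ind (0 ≤ dot (B r) uj)
          - ind (0 ≤ dot (B0 r) ui) * ind (0 ≤ dot (B0 r) uj)|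
          ≤ ind (|dot (B0 r) ui| ≤ R) + ind (|dot (B0 r) uj| ≤ R) := by
        calc |ind (0 ≤ dot (B r) ui) * ind (0 ≤ dot (B r) uj)
            - ind (0 ≤ dot (B0 r) ui) * ind (0 ≤ dot (B0 r) uj)|
            ≤ |ind (0 ≤ dot (B r) ui) - ind (0 ≤ dot (B0 r) ui)|
              + |ind (0 ≤ dot (B r) uj) - ind (0 ≤ dot (B0 r) uj)| :=
              ind_prod_diff (ind_nonneg _) (ind_le_one _) (ind_nonneg _) (ind_le_one _)
          _ ≤ ind (|dot (B0 r) ui| ≤ R) + ind (|dot (B0 r) uj| ≤ R) := by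
              gcongr
              · exact ind_flip (hdiff (X i) heXi r)
              · exact ind_flip (hdiff (X j) heXj r)
      exact mul_le_mul (hC2 i j) h1 (abs_nonneg _) (by norm_num)
    -- assemble
    rw [hg]
    unfold HFac
    rw [← mul_sub, ← Finset.sum_sub_distrib, abs_mul, abs_of_nonneg
      (by positivity : (0:ℝ) ≤ ((m:ℝ))⁻¹)]
    apply mul_le_mul_of_nonneg_left _ (by positivity : (0:ℝ) ≤ ((m:ℝ))⁻¹)
    calc |∑ r, (dotC X C i j * ind (0 ≤ dot (B r) ui) * ind (0 ≤ dot (B r) uj)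
          - dotC X C i j * ind (0 ≤ dot (B0 r) ui) * ind (0 ≤ dot (B0 r) uj))|
        ≤ ∑ r, |dotC X C i j * ind (0 ≤ dot (B r) ui) * ind (0 ≤ dot (B r) uj)
          - dotC X C i j * ind (0 ≤ dot (B0 r) ui) * ind (0 ≤ dot (B0 r) uj)| :=
          Finset.abs_sum_le_sum_abs _ _
      _ ≤ ∑ r, 2 * (ind (|dot (B0 r) ui| ≤ R) + ind (|dot (B0 r) uj| ≤ R)) :=
          Finset.sum_le_sum fun r _ => hterm r
  -- the set is nonempty and 0 is in it
  have hmem : ∀ B0 : Fin m → Fin ℓ → ℝ, |HFac X C B0 i j - HFac X C B0 i j| ∈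
      {w : ℝ | ∃ B : Fin m → Fin ℓ → ℝ,
      (∀ r, eunorm (fun q => vmul (B r) C q - vmul (B0 r) C q) ≤ R) ∧
      w = |HFac X C B i j - HFac X C B0 i j|} := by
    intro B0
    refine ⟨B0, fun r => ?_, rfl⟩
    have : (fun q => vmul (B0 r) C q - vmul (B0 r) C q) = fun _ => (0:ℝ) := by
      funext q; ring
    rw [this, eunorm]
    simp only [ne_eq, OfNat.ofNat_ne_zero, not_false_eq_true, zero_pow, Finset.sum_const,
      smul_zero, Real.sqrt_zero]
    exact hR.le
  -- integrability of g pieces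
  have hindInt : ∀ (u : Fin ℓ → ℝ) (r : Fin m),
      Integrable (fun B0 : Fin m → Fin ℓ → ℝ => ind (|dot (B0 r) u| ≤ R))
        (gaussMatrix m ℓ 1) := by
    intro u r
    have hme : Measurable (fun B0 : Fin m → Fin ℓ → ℝ => ind (|dot (B0 r) u| ≤ R)) :=
      (measurable_indSlab u R).comp (measurable_pi_apply r)
    refine (integrable_const (1:ℝ)).mono' hme.aestronglyMeasurable (ae_of_all _ fun B0 => ?_)
    rw [Real.norm_eq_abs, abs_of_nonneg (ind_nonneg _)]
    simpa using ind_le_one _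
  have hgint : Integrable g (gaussMatrix m ℓ 1) := by
    rw [hg]
    apply Integrable.const_mul
    exact integrable_finset_sum _ fun r _ => ((hindInt ui r).add (hindInt uj r)).const_mul 2
  -- the sup integral is bounded by the g integral
  have hle1 : (∫ B0, sSup {w : ℝ | ∃ B : Fin m → Fin ℓ → ℝ,
        (∀ r, eunorm (fun q => vmul (B r) C q - vmul (B0 r) C q) ≤ R) ∧
        w = |HFac X C B i j - HFac X C B0 i j|} ∂ gaussMatrix m ℓ 1)
      ≤ ∫ B0, g B0 ∂ gaussMatrix m ℓ 1 := by
    apply integral_mono_of_nonneg (ae_of_all _ fun B0 => ?_) hgint (ae_of_all _ fun B0 => ?_)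
    · have h0 := le_csSup ⟨g B0, fun w hw => hub B0 w hw⟩ (hmem B0)
      simpa using h0
    · exact csSup_le ⟨_, hmem B0⟩ (hub B0)
  -- compute the g integral
  have hprob : ∀ (u : Fin ℓ → ℝ), (∑ q, u q ^ 2 = 1) → ∀ r : Fin m,
      ∫ B0, ind (|dot (B0 r) u| ≤ R) ∂ gaussMatrix m ℓ 1 ≤ R := by
    intro u hu r
    have heq : ∫ B0, ind (|dot (B0 r) u| ≤ R) ∂ gaussMatrix m ℓ 1
        = ∫ b, ind (|dot b u| ≤ R) ∂ stdGaussian ℓ := by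
      have := integral_eval (m := m) (stdGaussian ℓ) r
        (fun b => ind (|dot b u| ≤ R)) (measurable_indSlab u R)
      exact this
    rw [heq]
    exact slab_bound u hu hR
  have hle2 : ∫ B0, g B0 ∂ gaussMatrix m ℓ 1 ≤ 4 * R := by
    rw [hg]
    simp only
    rw [integral_const_mul]
    have hEq := integral_finset_sum (μ := gaussMatrix m ℓ 1) Finset.univ
      (f := fun (r : Fin m) (B0 : Fin m → Fin ℓ → ℝ) =>
        2 * (ind (|dot (B0 r) ui| ≤ R) + ind (|dot (B0 r) uj| ≤ R)))
      (fun r _ => ((hindInt ui r).add (hindInt uj r)).const_mul 2)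
    rw [hEq]
    have hsum : ∑ r : Fin m, ∫ B0, 2 * (ind (|dot (B0 r) ui| ≤ R)
        + ind (|dot (B0 r) uj| ≤ R)) ∂ gaussMatrix m ℓ 1 ≤ (m : ℝ) * (4 * R) := by
      calc ∑ r : Fin m, ∫ B0, 2 * (ind (|dot (B0 r) ui| ≤ R)
            + ind (|dot (B0 r) uj| ≤ R)) ∂ gaussMatrix m ℓ 1
          ≤ ∑ _r : Fin m, 4 * R := by
            apply Finset.sum_le_sum
            intro r _
            rw [integral_const_mul, integral_add (hindInt ui r) (hindInt uj r)]
            have h1 := hprob ui hsumi r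
            have h2 := hprob uj hsumj r
            linarith
        _ = (m : ℝ) * (4 * R) := by
            rw [Finset.sum_const, Finset.card_univ, Fintype.card_fin, nsmul_eq_mul]
    calc (m:ℝ)⁻¹ * ∑ r : Fin m, ∫ B0, 2 * (ind (|dot (B0 r) ui| ≤ R)
          + ind (|dot (B0 r) uj| ≤ R)) ∂ gaussMatrix m ℓ 1
        ≤ (m:ℝ)⁻¹ * ((m : ℝ) * (4 * R)) := by
          apply mul_le_mul_of_nonneg_left hsum (by positivity)
      _ = 4 * R := by
          rw [← mul_assoc, inv_mul_cancel₀ (by positivity : (m:ℝ) ≠ 0), one_mul]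
  linarith


end
end

section
/- Fix a matrix C ∈ ℝ^{ℓ×d} with ‖X_j Cᵀ C‖ ≤ 2 for all j ∈ [n], fix v ∈ {−1,+1}^m, labels y ∈ ℝ^n, learning rate η > 0, λ₀ > 0, and an initialization B(0) ∈ ℝ^{m×ℓ}. Suppose the gradient-descent iterates B(0), B(1), …, B(t+1) satisfy the induction hypothesis ‖u(t') − y‖² ≤ (1 − ηλ₀/2)^{t'}·‖u(0) − y‖² for all t' ≤ t, where 0 < ηλ₀/2 < 1. Then for every r ∈ [m], writing W_r(s) := B_r(s)C, one has ‖W_r(t+1) − W_r(0)‖ ≤ C₀·√n·‖u(0) − y‖ / (√m·λ₀) for an absolute constant C₀ > 0. -/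
open MeasureTheory ProbabilityTheory Real
open scoped NNReal

noncomputable section

/-! ### Auxiliary lemmas -/

def toE {p : ℕ} (x : Fin p → ℝ) : EuclideanSpace ℝ (Fin p) := WithLp.toLp 2 x

lemma eunorm_eq_norm {p : ℕ} (x : Fin p → ℝ) : eunorm x = ‖toE x‖ := by
  rw [EuclideanSpace.norm_eq]
  unfold eunorm
  congr 1
  refine Finset.sum_congr rfl fun i _ => ?_
  rw [Real.norm_eq_abs, sq_abs]
  rfl

lemma eunorm_nonneg' {p : ℕ} (x : Fin p → ℝ) : 0 ≤ eunorm x := Real.sqrt_nonneg _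

lemma toE_sum {p n : ℕ} (c : Fin n → ℝ) (w : Fin n → Fin p → ℝ) :
    toE (fun q => ∑ j, c j * w j q) = ∑ j, c j • toE (w j) := by
  ext q
  simp [toE]

lemma eunorm_sum_smul_le {p n : ℕ} (c : Fin n → ℝ) (w : Fin n → Fin p → ℝ) :
    eunorm (fun q => ∑ j, c j * w j q) ≤ ∑ j, |c j| * eunorm (w j) := by
  rw [eunorm_eq_norm, toE_sum]
  refine (norm_sum_le _ _).trans ?_
  refine Finset.sum_le_sum fun j _ => ?_
  rw [norm_smul, Real.norm_eq_abs, eunorm_eq_norm]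

lemma sum_abs_le_sqrt {n : ℕ} (a : Fin n → ℝ) : ∑ j, |a j| ≤ Real.sqrt n * eunorm a := by
  have h := Finset.sum_mul_sq_le_sq_mul_sq Finset.univ (fun _ => (1:ℝ)) (fun j => |a j|)
  simp only [one_mul, one_pow, Finset.sum_const, Finset.card_univ, Fintype.card_fin,
    nsmul_eq_mul, mul_one, sq_abs] at h
  have h0 : 0 ≤ ∑ j, |a j| := Finset.sum_nonneg fun j _ => abs_nonneg _
  have h2 := Real.sqrt_le_sqrt h
  rwa [Real.sqrt_sq h0, Real.sqrt_mul (Nat.cast_nonneg n)] at h2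

lemma geomSum_le' {r : ℝ} (h0 : 0 ≤ r) (h1 : r < 1) (N : ℕ) :
    ∑ s ∈ Finset.range N, r ^ s ≤ 1 / (1 - r) := by
  rw [geom_sum_eq (by linarith)]
  rw [show (r ^ N - 1) / (r - 1) = (1 - r ^ N) / (1 - r) by rw [← neg_div_neg_eq]; ring_nf]
  rw [div_le_div_iff_of_pos_right (by linarith)]
  nlinarith [pow_nonneg h0 N]

lemma sqrt_pow_eq (x : ℝ) (h : 0 ≤ x) (n : ℕ) : Real.sqrt (x ^ n) = (Real.sqrt x) ^ n := by
  induction n with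
  | zero => simp
  | succ k ih => rw [pow_succ, Real.sqrt_mul (pow_nonneg h k), ih, pow_succ]

theorem stmt6 :
    ∃ C₀ : ℝ, 0 < C₀ ∧
    ∀ (n d ℓ m : ℕ), 0 < m →
    ∀ X : Fin n → Fin d → ℝ, (∀ i, ∑ j, X i j ^ 2 = 1) →
    ∀ C : Fin ℓ → Fin d → ℝ, (∀ j, eunorm (vmul (mvec C (X j)) C) ≤ 2) →
    ∀ v : Fin m → ℝ, (∀ r, v r = 1 ∨ v r = -1) →
    ∀ y : Fin n → ℝ, ∀ η lam0 : ℝ, 0 < η → 0 < lam0 →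
    0 < η * lam0 / 2 → η * lam0 / 2 < 1 →
    ∀ B : ℕ → Fin m → Fin ℓ → ℝ, ∀ t : ℕ,
    (∀ s, s ≤ t → ∀ r, B (s + 1) r = fun q => B s r q - η * gradFac X C v y (B s) r q) →
    (∀ t' ≤ t, ∑ i, (netFac X C v (B t') i - y i) ^ 2 ≤
        (1 - η * lam0 / 2) ^ t' * ∑ i, (netFac X C v (B 0) i - y i) ^ 2) →
    ∀ r, eunorm (fun q => vmul (B (t + 1) r) C q - vmul (B 0 r) C q) ≤
      C₀ * Real.sqrt n * eunorm (fun i => netFac X C v (B 0) i - y i) /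
        (Real.sqrt m * lam0) := by
  refine ⟨8, by norm_num, ?_⟩
  intro n d ℓ m hm X hX C hC v hv y η lam0 hη hlam0 hx0 hx1 B t hupd hind r
  set ρ := 1 - η * lam0 / 2 with hρdef
  have hρ0 : 0 ≤ ρ := by rw [hρdef]; linarith
  have hρ1 : ρ < 1 := by rw [hρdef]; linarith
  set r0 := Real.sqrt ρ with hr0def
  have hr00 : 0 ≤ r0 := Real.sqrt_nonneg _
  have hr0sq : r0 ^ 2 = ρ := Real.sq_sqrt hρ0
  have hr01 : r0 < 1 := by nlinarith
  set E0 := eunorm (fun i => netFac X C v (B 0) i - y i) with hE0def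
  have hE0nn : 0 ≤ E0 := eunorm_nonneg' _
  have hsm : 0 < Real.sqrt m := Real.sqrt_pos.mpr (by exact_mod_cast hm)
  set K := 2 * η * Real.sqrt n / Real.sqrt m * E0 with hKdef
  have hKnn : 0 ≤ K := by
    apply mul_nonneg _ hE0nn
    apply div_nonneg _ hsm.le
    positivity
  -- single step bound
  have step : ∀ s, s ≤ t →
      eunorm (fun q => vmul (B (s + 1) r) C q - vmul (B s r) C q) ≤ K * r0 ^ s := by
    intro s hs
    have hBq : ∀ q, B (s + 1) r q = B s r q - η * gradFac X C v y (B s) r q :=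
      fun q => congrFun (hupd s hs r) q
    set c : Fin n → ℝ := fun j => η * (Real.sqrt m)⁻¹ *
      ((y j - netFac X C v (B s) j) * v r * ind (0 ≤ dot (B s r) (mvec C (X j)))) with hc
    have hg : ∀ q, η * gradFac X C v y (B s) r q = -∑ j, c j * mvec C (X j) q := by
      intro q
      simp only [gradFac, neg_mul]
      rw [mul_neg, Finset.mul_sum, Finset.mul_sum, neg_inj]
      refine Finset.sum_congr rfl fun j _ => ?_
      simp only [hc]; ring
    have key : (fun q' => vmul (B (s + 1) r) C q' - vmul (B s r) C q')
        = fun q' => ∑ j, c j * vmul (mvec C (X j)) C q' := by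
      funext q'
      simp only [vmul, hBq]
      rw [← Finset.sum_sub_distrib]
      have h1 : ∀ q ∈ Finset.univ, ((B s r q - η * gradFac X C v y (B s) r q) * C q q'
          - B s r q * C q q') = ∑ j, c j * (mvec C (X j) q * C q q') := by
        intro q _
        rw [hg q, show ∀ (b S cc : ℝ), (b - -S) * cc - b * cc = S * cc from
          fun b S cc => by ring, Finset.sum_mul]
        exact Finset.sum_congr rfl fun j _ => by ring
      rw [Finset.sum_congr rfl h1, Finset.sum_comm]
      exact Finset.sum_congr rfl fun j _ => (Finset.mul_sum _ _ _).symm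
    have hcj : ∀ j, |c j| ≤ η * (Real.sqrt m)⁻¹ * |netFac X C v (B s) j - y j| := by
      intro j
      have hv' : |v r| = 1 := by rcases hv r with h | h <;> simp [h]
      have hind1 : |ind (0 ≤ dot (B s r) (mvec C (X j)))| ≤ 1 := by
        unfold ind; split <;> norm_num
      have h1 : |(y j - netFac X C v (B s) j) * v r * ind (0 ≤ dot (B s r) (mvec C (X j)))|
          ≤ |netFac X C v (B s) j - y j| := by
        rw [abs_mul, abs_mul, hv', mul_one, abs_sub_comm]
        exact mul_le_of_le_one_right (abs_nonneg _) hind1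
      have h2 : 0 ≤ η * (Real.sqrt m)⁻¹ := by positivity
      calc |c j| = (η * (Real.sqrt m)⁻¹) *
            |(y j - netFac X C v (B s) j) * v r * ind (0 ≤ dot (B s r) (mvec C (X j)))| := by
              rw [hc]; rw [abs_mul, abs_of_nonneg h2]
        _ ≤ _ := mul_le_mul_of_nonneg_left h1 h2
    have hE : eunorm (fun i => netFac X C v (B s) i - y i) ≤ r0 ^ s * E0 := by
      have h := hind s hs
      have h2 := Real.sqrt_le_sqrt h
      calc eunorm (fun i => netFac X C v (B s) i - y i)
          = Real.sqrt (∑ i, (netFac X C v (B s) i - y i) ^ 2) := rfl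
        _ ≤ Real.sqrt (ρ ^ s * ∑ i, (netFac X C v (B 0) i - y i) ^ 2) := h2
        _ = r0 ^ s * E0 := by
            rw [Real.sqrt_mul (pow_nonneg hρ0 s), sqrt_pow_eq _ hρ0]
            rfl
    calc eunorm (fun q => vmul (B (s + 1) r) C q - vmul (B s r) C q)
        = eunorm (fun q' => ∑ j, c j * vmul (mvec C (X j)) C q') := by rw [key]
      _ ≤ ∑ j, |c j| * eunorm (vmul (mvec C (X j)) C) := eunorm_sum_smul_le _ _
      _ ≤ ∑ j, (η * (Real.sqrt m)⁻¹ * |netFac X C v (B s) j - y j|) * 2 := by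
          refine Finset.sum_le_sum fun j _ => ?_
          refine mul_le_mul (hcj j) (hC j) (eunorm_nonneg' _) ?_
          positivity
      _ = (2 * η * (Real.sqrt m)⁻¹) * ∑ j, |netFac X C v (B s) j - y j| := by
          rw [Finset.mul_sum]
          exact Finset.sum_congr rfl fun j _ => by ring
      _ ≤ (2 * η * (Real.sqrt m)⁻¹) *
            (Real.sqrt n * eunorm (fun i => netFac X C v (B s) i - y i)) := by
          refine mul_le_mul_of_nonneg_left ?_ (by positivity)
          exact sum_abs_le_sqrt _
      _ ≤ (2 * η * (Real.sqrt m)⁻¹) * (Real.sqrt n * (r0 ^ s * E0)) := by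
          refine mul_le_mul_of_nonneg_left ?_ (by positivity)
          exact mul_le_mul_of_nonneg_left hE (Real.sqrt_nonneg _)
      _ = K * r0 ^ s := by rw [hKdef]; field_simp
  -- telescoping
  have tele : eunorm (fun q => vmul (B (t + 1) r) C q - vmul (B 0 r) C q)
      ≤ ∑ s ∈ Finset.range (t + 1),
          eunorm (fun q => vmul (B (s + 1) r) C q - vmul (B s r) C q) := by
    rw [eunorm_eq_norm]
    have hsum : toE (fun q => vmul (B (t + 1) r) C q - vmul (B 0 r) C q)
        = ∑ s ∈ Finset.range (t + 1),
            (toE (fun q => vmul (B (s + 1) r) C q) - toE (fun q => vmul (B s r) C q)) := by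
      rw [Finset.sum_range_sub (fun s => toE (fun q => vmul (B s r) C q))]
      ext q; simp [toE]
    rw [hsum]
    refine (norm_sum_le _ _).trans ?_
    refine Finset.sum_le_sum fun s _ => ?_
    rw [eunorm_eq_norm]
    exact le_of_eq (by congr 1)
  have h4 : η * lam0 / 4 ≤ 1 - r0 := by
    have hsq : r0 ^ 2 = 1 - η * lam0 / 2 := by rw [hr0sq, hρdef]
    nlinarith [sq_nonneg (1 - r0), hsq]
  have h1r0 : 0 < 1 - r0 := by linarith
  calc eunorm (fun q => vmul (B (t + 1) r) C q - vmul (B 0 r) C q)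
      ≤ ∑ s ∈ Finset.range (t + 1),
          eunorm (fun q => vmul (B (s + 1) r) C q - vmul (B s r) C q) := tele
    _ ≤ ∑ s ∈ Finset.range (t + 1), K * r0 ^ s := by
        refine Finset.sum_le_sum fun s hsmem => ?_
        exact step s (Nat.lt_succ_iff.mp (Finset.mem_range.mp hsmem))
    _ = K * ∑ s ∈ Finset.range (t + 1), r0 ^ s := (Finset.mul_sum _ _ _).symm
    _ ≤ K * (1 / (1 - r0)) := mul_le_mul_of_nonneg_left (geomSum_le' hr00 hr01 _) hKnn
    _ ≤ K * (1 / (η * lam0 / 4)) := by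
        refine mul_le_mul_of_nonneg_left ?_ hKnn
        exact one_div_le_one_div_of_le (by positivity) h4
    _ = 8 * Real.sqrt n * E0 / (Real.sqrt m * lam0) := by
        rw [hKdef]
        field_simp
        ring


end
end

section
/- Fix a matrix C ∈ ℝ^{ℓ×d} with |X_i Cᵀ C X_jᵀ| ≤ 2 for all i, j ∈ [n], fix v ∈ {−1,+1}^m, y ∈ ℝ^n, η > 0, and weights B(t) ∈ ℝ^{m×ℓ}. For i ∈ [n], let S_i^⊥ ⊆ [m] be any set of neurons and define I₂^i := (1/√m) Σ_{r ∈ S_i^⊥} v_r·[ σ((B_r(t) − η·∂Φ(B(t))/∂B_r(t))·(C X_iᵀ)) − σ(B_r(t)·(C X_iᵀ)) ]. Then |I₂^i| ≤ C₀·η·√n·|S_i^⊥|·‖y − u(t)‖ / m for an absolute constant C₀ > 0. -/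
open MeasureTheory ProbabilityTheory Real
open scoped NNReal

noncomputable section

theorem stmt8 :
    ∃ C₀ : ℝ, 0 < C₀ ∧
    ∀ (n d ℓ m : ℕ), 0 < m →
    ∀ X : Fin n → Fin d → ℝ, (∀ i, ∑ j, X i j ^ 2 = 1) →
    ∀ C : Fin ℓ → Fin d → ℝ, (∀ i j, |dotC X C i j| ≤ 2) →
    ∀ v : Fin m → ℝ, (∀ r, v r = 1 ∨ v r = -1) →
    ∀ y : Fin n → ℝ, ∀ η : ℝ, 0 < η →
    ∀ B : Fin m → Fin ℓ → ℝ, ∀ S : Fin n → Finset (Fin m), ∀ i : Fin n,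
    |(Real.sqrt m)⁻¹ * ∑ r ∈ S i, v r *
        (max 0 (dot (fun q => B r q - η * gradFac X C v y B r q) (mvec C (X i))) -
          max 0 (dot (B r) (mvec C (X i))))| ≤
      C₀ * η * Real.sqrt n * (S i).card *
        eunorm (fun j => y j - netFac X C v B j) / m := by
  refine ⟨2, by norm_num, ?_⟩
  intro n d ℓ m hm X hX C hC v hv y η hη B S i
  set z : Fin n → ℝ := fun j => y j - netFac X C v B j with hz
  set w : Fin ℓ → ℝ := mvec C (X i) with hw
  have hvabs : ∀ r, |v r| = 1 := fun r => by rcases hv r with h | h <;> simp [h]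
  have hm0 : (0:ℝ) < m := by exact_mod_cast hm
  have hsm : (0:ℝ) < Real.sqrt m := Real.sqrt_pos.mpr hm0
  have hsminv : (0:ℝ) ≤ (Real.sqrt m)⁻¹ := le_of_lt (inv_pos.mpr hsm)
  -- Cauchy–Schwarz: ∑ |z j| ≤ √n * eunorm z
  have hCS : ∑ j, |z j| ≤ Real.sqrt n * eunorm z := by
    have h1 : (∑ j, |z j|) ^ 2 ≤ (∑ _j : Fin n, (1:ℝ) ^ 2) * ∑ j, z j ^ 2 := by
      calc (∑ j, |z j|) ^ 2 = (∑ j, (1:ℝ) * |z j|) ^ 2 := by simp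
        _ ≤ (∑ _j : Fin n, (1:ℝ) ^ 2) * ∑ j, |z j| ^ 2 :=
            Finset.sum_mul_sq_le_sq_mul_sq Finset.univ _ _
        _ = (∑ _j : Fin n, (1:ℝ) ^ 2) * ∑ j, z j ^ 2 := by simp [sq_abs]
    have h2 : ∑ j, |z j| ≤ Real.sqrt ((∑ _j : Fin n, (1:ℝ) ^ 2) * ∑ j, z j ^ 2) := by
      have := Real.sqrt_le_sqrt h1
      rwa [Real.sqrt_sq (Finset.sum_nonneg fun j _ => abs_nonneg _)] at this
    calc ∑ j, |z j| ≤ Real.sqrt ((∑ _j : Fin n, (1:ℝ) ^ 2) * ∑ j, z j ^ 2) := h2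
      _ = Real.sqrt n * eunorm z := by
          rw [Real.sqrt_mul (by positivity)]; simp [eunorm]
  -- per-term bound
  have key : ∀ r : Fin m,
      |v r * (max 0 (dot (fun q => B r q - η * gradFac X C v y B r q) w)
        - max 0 (dot (B r) w))| ≤ η * ((Real.sqrt m)⁻¹ * (2 * ∑ j, |z j|)) := by
    intro r
    have hdot : dot (fun q => B r q - η * gradFac X C v y B r q) w
        = dot (B r) w - η * dot (gradFac X C v y B r) w := by
      simp [dot, sub_mul, Finset.sum_sub_distrib, Finset.mul_sum, mul_assoc]
    have hgw : dot (gradFac X C v y B r) w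
        = -(Real.sqrt m)⁻¹ * ∑ j, z j * v r * ind (0 ≤ dot (B r) (mvec C (X j))) * dotC X C j i := by
      have e1 : dot (gradFac X C v y B r) w
          = ∑ q, ∑ j, -(Real.sqrt m)⁻¹ *
              ((y j - netFac X C v B j) * v r * ind (0 ≤ dot (B r) (mvec C (X j))) *
                mvec C (X j) q) * w q := by
        simp [dot, gradFac, Finset.sum_mul, Finset.mul_sum]
      rw [e1, Finset.sum_comm]
      conv_rhs => rw [Finset.mul_sum]
      refine Finset.sum_congr rfl fun j _ => ?_
      simp only [hz, dotC, dot, Finset.mul_sum]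
      refine Finset.sum_congr rfl fun q _ => ?_
      simp only [hw]
      ring
    have hgwabs : |dot (gradFac X C v y B r) w| ≤ (Real.sqrt m)⁻¹ * (2 * ∑ j, |z j|) := by
      rw [hgw, abs_mul, abs_neg, abs_inv, abs_of_nonneg (Real.sqrt_nonneg _)]
      gcongr
      calc |∑ j, z j * v r * ind (0 ≤ dot (B r) (mvec C (X j))) * dotC X C j i|
          ≤ ∑ j, |z j * v r * ind (0 ≤ dot (B r) (mvec C (X j))) * dotC X C j i| :=
            Finset.abs_sum_le_sum_abs _ _
        _ ≤ ∑ j, |z j| * 2 := by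
            apply Finset.sum_le_sum
            intro j _
            rw [abs_mul, abs_mul, abs_mul, hvabs, mul_one]
            have hind : |ind (0 ≤ dot (B r) (mvec C (X j)))| ≤ 1 := by
              unfold ind; split <;> norm_num
            have h3 : |z j| * |ind (0 ≤ dot (B r) (mvec C (X j)))| ≤ |z j| * 1 :=
              mul_le_mul_of_nonneg_left hind (abs_nonneg _)
            have h4 : |z j| * |ind (0 ≤ dot (B r) (mvec C (X j)))| * |dotC X C j i|
                ≤ (|z j| * 1) * 2 :=
              mul_le_mul h3 (hC j i) (abs_nonneg _) (by positivity)
            simpa [mul_one] using h4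
        _ = 2 * ∑ j, |z j| := by rw [Finset.mul_sum]; exact Finset.sum_congr rfl fun j _ => by ring
    calc |v r * (max 0 (dot (fun q => B r q - η * gradFac X C v y B r q) w)
          - max 0 (dot (B r) w))|
        = |max (dot (fun q => B r q - η * gradFac X C v y B r q) w) 0
          - max (dot (B r) w) 0| := by
            rw [abs_mul, hvabs, one_mul, max_comm 0, max_comm 0]
      _ ≤ |dot (fun q => B r q - η * gradFac X C v y B r q) w - dot (B r) w| :=
          abs_max_sub_max_le_abs _ _ _
      _ = η * |dot (gradFac X C v y B r) w| := by
          rw [hdot, show dot (B r) w - η * dot (gradFac X C v y B r) w - dot (B r) w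
            = -(η * dot (gradFac X C v y B r) w) by ring, abs_neg, abs_mul,
            abs_of_pos hη]
      _ ≤ η * ((Real.sqrt m)⁻¹ * (2 * ∑ j, |z j|)) := by gcongr
  -- assemble
  have hsum : |∑ r ∈ S i, v r *
      (max 0 (dot (fun q => B r q - η * gradFac X C v y B r q) w)
        - max 0 (dot (B r) w))| ≤
      (S i).card * (η * ((Real.sqrt m)⁻¹ * (2 * ∑ j, |z j|))) := by
    calc _ ≤ ∑ r ∈ S i, |v r *
        (max 0 (dot (fun q => B r q - η * gradFac X C v y B r q) w)
          - max 0 (dot (B r) w))| := Finset.abs_sum_le_sum_abs _ _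
      _ ≤ ∑ _r ∈ S i, η * ((Real.sqrt m)⁻¹ * (2 * ∑ j, |z j|)) :=
          Finset.sum_le_sum fun r _ => key r
      _ = (S i).card * (η * ((Real.sqrt m)⁻¹ * (2 * ∑ j, |z j|))) := by
          rw [Finset.sum_const, nsmul_eq_mul]
  rw [abs_mul, abs_inv, abs_of_nonneg (Real.sqrt_nonneg _)]
  have hmm : (Real.sqrt m)⁻¹ * (Real.sqrt m)⁻¹ = (m : ℝ)⁻¹ := by
    rw [← mul_inv, Real.mul_self_sqrt (le_of_lt hm0)]
  have hfin : (Real.sqrt m)⁻¹ *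
        ((S i).card * (η * ((Real.sqrt m)⁻¹ * (2 * (Real.sqrt n * eunorm z)))))
      = 2 * η * Real.sqrt n * (S i).card * eunorm z / m := by
    have e2 : (Real.sqrt m)⁻¹ *
          ((S i).card * (η * ((Real.sqrt m)⁻¹ * (2 * (Real.sqrt n * eunorm z)))))
        = ((Real.sqrt m)⁻¹ * (Real.sqrt m)⁻¹) *
          (2 * η * Real.sqrt n * (S i).card * eunorm z) := by ring
    rw [e2, hmm, div_eq_mul_inv]; ring
  calc (Real.sqrt m)⁻¹ * |∑ r ∈ S i, v r *
        (max 0 (dot (fun q => B r q - η * gradFac X C v y B r q) w)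
          - max 0 (dot (B r) w))|
      ≤ (Real.sqrt m)⁻¹ * ((S i).card * (η * ((Real.sqrt m)⁻¹ * (2 * ∑ j, |z j|)))) := by
        gcongr
    _ ≤ (Real.sqrt m)⁻¹ *
        ((S i).card * (η * ((Real.sqrt m)⁻¹ * (2 * (Real.sqrt n * eunorm z))))) := by
        gcongr
    _ = 2 * η * Real.sqrt n * (S i).card * eunorm z / m := hfin

end
end

section
/- Fix a matrix C ∈ ℝ^{ℓ×d} with |X_i Cᵀ C X_jᵀ| ≤ 1 for all i, j ∈ [n], fix v ∈ {−1,+1}^m, y ∈ ℝ^n, and η > 0. Let B(t+1) be obtained from B(t) by one gradient-descent step with learning rate η on Φ(B) = ½‖y − u‖². Then ‖u(t+1) − u(t)‖² ≤ η²·n²·‖y − u(t)‖². -/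
open MeasureTheory ProbabilityTheory Real
open scoped NNReal

noncomputable section

lemma abs_ind_le (P : Prop) : |ind P| ≤ 1 := by
  unfold ind; split_ifs <;> norm_num

theorem stmt10 :
    ∀ (n d ℓ m : ℕ), 0 < m →
    ∀ X : Fin n → Fin d → ℝ, (∀ i, ∑ j, X i j ^ 2 = 1) →
    ∀ C : Fin ℓ → Fin d → ℝ, (∀ i j, |dotC X C i j| ≤ 1) →
    ∀ v : Fin m → ℝ, (∀ r, v r = 1 ∨ v r = -1) →
    ∀ y : Fin n → ℝ, ∀ η : ℝ, 0 < η →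
    ∀ B B' : Fin m → Fin ℓ → ℝ,
    (∀ r, B' r = fun q => B r q - η * gradFac X C v y B r q) →
    ∑ i, (netFac X C v B' i - netFac X C v B i) ^ 2 ≤
      η ^ 2 * (n : ℝ) ^ 2 * ∑ i, (y i - netFac X C v B i) ^ 2 := by
  intro n d ℓ m hm X hX C hC v hv y η hη B B' hB'
  set e : Fin n → ℝ := fun j => y j - netFac X C v B j with he
  set S : ℝ := ∑ j, |e j| with hS
  have hmR : (0:ℝ) < m := Nat.cast_pos.mpr hm
  have hsm : (0:ℝ) < Real.sqrt m := Real.sqrt_pos.mpr hmR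
  have hvabs : ∀ r, |v r| = 1 := by
    intro r; rcases hv r with h | h <;> simp [h]
  -- bound on the change of each pre-activation
  have step : ∀ r i, |dot (B' r) (mvec C (X i)) - dot (B r) (mvec C (X i))| ≤
      η * (Real.sqrt m)⁻¹ * S := by
    intro r i
    have hdq : ∀ q, B' r q - B r q = η * (Real.sqrt m)⁻¹ *
        ∑ j, e j * v r * ind (0 ≤ dot (B r) (mvec C (X j))) * mvec C (X j) q := by
      intro q
      rw [hB' r]
      simp only [gradFac, he]
      ring
    have h1 : dot (B' r) (mvec C (X i)) - dot (B r) (mvec C (X i))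
        = η * (Real.sqrt m)⁻¹ *
          ∑ j, e j * v r * ind (0 ≤ dot (B r) (mvec C (X j))) * dotC X C j i := by
      unfold dot
      rw [← Finset.sum_sub_distrib]
      calc (∑ q, (B' r q * mvec C (X i) q - B r q * mvec C (X i) q))
          = ∑ q, ∑ j, η * (Real.sqrt m)⁻¹ *
              (e j * v r * ind (0 ≤ dot (B r) (mvec C (X j)))
                * (mvec C (X j) q * mvec C (X i) q)) := by
            refine Finset.sum_congr rfl fun q _ => ?_
            rw [← sub_mul, hdq q, mul_assoc, Finset.sum_mul, Finset.mul_sum]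
            refine Finset.sum_congr rfl fun j _ => ?_
            ring
        _ = η * (Real.sqrt m)⁻¹ *
            ∑ j, e j * v r * ind (0 ≤ dot (B r) (mvec C (X j))) * dotC X C j i := by
            rw [Finset.sum_comm]
            simp only [← Finset.mul_sum]
            simp [dotC, dot]
    rw [h1, abs_mul, abs_of_nonneg (by positivity : (0:ℝ) ≤ η * (Real.sqrt m)⁻¹)]
    have hSb : |∑ j, e j * v r * ind (0 ≤ dot (B r) (mvec C (X j))) * dotC X C j i| ≤ S := by
      refine (Finset.abs_sum_le_sum_abs _ _).trans ?_
      refine Finset.sum_le_sum fun j _ => ?_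
      rw [abs_mul, abs_mul, abs_mul]
      calc |e j| * |v r| * |ind (0 ≤ dot (B r) (mvec C (X j)))| * |dotC X C j i|
          ≤ |e j| * 1 * 1 * 1 := by
            gcongr
            · exact (hvabs r).le
            · exact abs_ind_le _
            · exact hC j i
        _ = |e j| := by ring
    have := mul_le_mul_of_nonneg_left hSb (by positivity : (0:ℝ) ≤ η * (Real.sqrt m)⁻¹)
    linarith
  -- bound on the change of each output
  have out : ∀ i, |netFac X C v B' i - netFac X C v B i| ≤ η * S := by
    intro i
    have h2 : netFac X C v B' i - netFac X C v B i
        = (Real.sqrt m)⁻¹ * ∑ r, v r *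
            (max 0 (dot (B' r) (mvec C (X i))) - max 0 (dot (B r) (mvec C (X i)))) := by
      simp only [netFac]
      rw [← mul_sub, ← Finset.sum_sub_distrib]
      simp [mul_sub]
    rw [h2, abs_mul, abs_of_pos (inv_pos.mpr hsm)]
    have hsum : |∑ r, v r * (max 0 (dot (B' r) (mvec C (X i)))
          - max 0 (dot (B r) (mvec C (X i))))| ≤ (m : ℝ) * (η * (Real.sqrt m)⁻¹ * S) := by
      refine (Finset.abs_sum_le_sum_abs _ _).trans ?_
      calc ∑ r, |v r * (max 0 (dot (B' r) (mvec C (X i)))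
              - max 0 (dot (B r) (mvec C (X i))))|
          ≤ ∑ _r : Fin m, η * (Real.sqrt m)⁻¹ * S := by
            refine Finset.sum_le_sum fun r _ => ?_
            rw [abs_mul, hvabs r, one_mul]
            calc |max 0 (dot (B' r) (mvec C (X i))) - max 0 (dot (B r) (mvec C (X i)))|
                = |max (dot (B' r) (mvec C (X i))) 0 - max (dot (B r) (mvec C (X i))) 0| := by
                  rw [max_comm, max_comm (dot (B r) (mvec C (X i)))]
              _ ≤ |dot (B' r) (mvec C (X i)) - dot (B r) (mvec C (X i))| :=
                  abs_max_sub_max_le_abs _ _ _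
              _ ≤ η * (Real.sqrt m)⁻¹ * S := step r i
        _ = (m : ℝ) * (η * (Real.sqrt m)⁻¹ * S) := by
            rw [Finset.sum_const, Finset.card_fin, nsmul_eq_mul]
    calc (Real.sqrt m)⁻¹ * |∑ r, v r * (max 0 (dot (B' r) (mvec C (X i)))
            - max 0 (dot (B r) (mvec C (X i))))|
        ≤ (Real.sqrt m)⁻¹ * ((m : ℝ) * (η * (Real.sqrt m)⁻¹ * S)) :=
          mul_le_mul_of_nonneg_left hsum (by positivity)
      _ = η * S := by
          rw [← Real.mul_self_sqrt hmR.le]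
          field_simp
          rw [Real.sqrt_sq hsm.le]
  -- combine
  have hS2 : S ^ 2 ≤ (n : ℝ) * ∑ j, e j ^ 2 := by
    have := sq_sum_le_card_mul_sum_sq (s := (Finset.univ : Finset (Fin n)))
      (f := fun j => |e j|)
    simpa [hS, sq_abs] using this
  calc ∑ i, (netFac X C v B' i - netFac X C v B i) ^ 2
      ≤ ∑ _i : Fin n, η ^ 2 * ((n : ℝ) * ∑ j, e j ^ 2) := by
        refine Finset.sum_le_sum fun i _ => ?_
        calc (netFac X C v B' i - netFac X C v B i) ^ 2
            = |netFac X C v B' i - netFac X C v B i| ^ 2 := (sq_abs _).symm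
          _ ≤ (η * S) ^ 2 := pow_le_pow_left₀ (abs_nonneg _) (out i) 2
          _ = η ^ 2 * S ^ 2 := by ring
          _ ≤ η ^ 2 * ((n : ℝ) * ∑ j, e j ^ 2) :=
              mul_le_mul_of_nonneg_left hS2 (by positivity)
    _ = η ^ 2 * (n : ℝ) ^ 2 * ∑ i, (y i - netFac X C v B i) ^ 2 := by
        rw [Finset.sum_const, Finset.card_fin, nsmul_eq_mul]
        simp only [he]; ring
end
end
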